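/- arXiv:1906.10933 — 2 statements merged into one kernel-verified Lean document; each statement's English description precedes it below -/
import Mathlib

section
/- Let S : X → E be an admissible impact map, A ⊂ E an admissible acceptance set, ρ(X) = inf{Σ_{i=1}^d m_i : m ∈ ℝ^d, S(X+m) ∈ A}, and set M_0 := {m ∈ ℝ^d : Σ_{i=1}^d m_i = 0}. If S^{-1}(A) ∩ M_0 = {0}, then ρ is proper and σ(X,X')-lower semicontinuous. -/
open MeasureTheory Filter Set
open scoped ENNReal

noncomputable section

namespace SystemicRisk

variable {Ω : Type*} [MeasurableSpace Ω]

/-- A random variable is essentially bounded. -/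
def EssBdd {μ : Measure Ω} (f : Ω →ₘ[μ] ℝ) : Prop :=
  ∃ C : ℝ, ∀ᵐ ω ∂μ, |f ω| ≤ C

/-- The scalar pairing `E[U W]`. -/
def ip {μ : Measure Ω} (U W : Ω →ₘ[μ] ℝ) : ℝ := ∫ ω, U ω * W ω ∂μ

/-- The Köthe dual of a set of random variables. -/
def kdual {μ : Measure Ω} (L : Set (Ω →ₘ[μ] ℝ)) : Set (Ω →ₘ[μ] ℝ) :=
  {Z | ∀ f ∈ L, Integrable (fun ω => f ω * Z ω) μ}

/-- `nrm` is a Banach lattice norm on `L` (w.r.t. the a.s. order). -/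
structure IsBLNorm {μ : Measure Ω} (L : Set (Ω →ₘ[μ] ℝ)) (nrm : (Ω →ₘ[μ] ℝ) → ℝ) : Prop where
  nonneg : ∀ f ∈ L, 0 ≤ nrm f
  eq_zero_iff : ∀ f ∈ L, (nrm f = 0 ↔ f = 0)
  smul_eq : ∀ f ∈ L, ∀ c : ℝ, nrm (c • f) = |c| * nrm f
  triangle : ∀ f ∈ L, ∀ g ∈ L, nrm (f + g) ≤ nrm f + nrm g
  solid : ∀ f ∈ L, ∀ g ∈ L, |f| ≤ |g| → nrm f ≤ nrm g
  complete : ∀ u : ℕ → (Ω →ₘ[μ] ℝ), (∀ n, u n ∈ L) →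
      (∀ ε : ℝ, 0 < ε → ∃ N : ℕ, ∀ m ≥ N, ∀ n ≥ N, nrm (u m - u n) < ε) →
      ∃ f ∈ L, ∀ ε : ℝ, 0 < ε → ∃ N : ℕ, ∀ n ≥ N, nrm (u n - f) < ε

/-- `L` is an admissible space: a linear subspace of `L^0` which is a Banach lattice
(for the a.s. order, with norm `nrm`) satisfying `L^∞ ⊆ L ⊆ L^1`. -/
structure IsAdmissible {μ : Measure Ω} (L : Set (Ω →ₘ[μ] ℝ)) (nrm : (Ω →ₘ[μ] ℝ) → ℝ) : Prop where
  zero_mem : (0 : Ω →ₘ[μ] ℝ) ∈ L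
  add_mem : ∀ f ∈ L, ∀ g ∈ L, f + g ∈ L
  smul_mem : ∀ (c : ℝ), ∀ f ∈ L, c • f ∈ L
  sup_mem : ∀ f ∈ L, ∀ g ∈ L, f ⊔ g ∈ L
  inf_mem : ∀ f ∈ L, ∀ g ∈ L, f ⊓ g ∈ L
  linfty_subset : ∀ f, EssBdd f → f ∈ L
  subset_lone : ∀ f ∈ L, Integrable f μ
  banach : IsBLNorm L nrm

variable {d : ℕ}

/-- The product space `X = X_1 × ⋯ × X_d`. -/
def prodSet {μ : Measure Ω} (Li : Fin d → Set (Ω →ₘ[μ] ℝ)) : Set (Fin d → (Ω →ₘ[μ] ℝ)) :=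
  {X | ∀ i, X i ∈ Li i}

/-- The vector pairing `E[⟨X,Z⟩] = ∑ i, E[X_i Z_i]`. -/
def pairing {μ : Measure Ω} (X Z : Fin d → (Ω →ₘ[μ] ℝ)) : ℝ := ∑ i, ip (X i) (Z i)

/-- The constant random vector associated with `m ∈ ℝ^d`. -/
def cvec (μ : Measure Ω) (m : Fin d → ℝ) : Fin d → (Ω →ₘ[μ] ℝ) :=
  fun i => (AEEqFun.const Ω (m i) : Ω →ₘ[μ] ℝ)

/-- The weak topology `σ(P, D)` on a set of random vectors `P` induced by the pairing
with elements of `D`. -/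
def wtop {μ : Measure Ω} (P D : Set (Fin d → (Ω →ₘ[μ] ℝ))) : TopologicalSpace ↥P :=
  TopologicalSpace.induced
    (fun X : ↥P => fun Z : ↥D => pairing (X : Fin d → (Ω →ₘ[μ] ℝ)) (Z : Fin d → (Ω →ₘ[μ] ℝ)))
    Pi.topologicalSpace

/-- The weak topology `σ(P, D)` on a set of random variables `P` induced by the pairing
with elements of `D`. -/
def wtop1 {μ : Measure Ω} (P D : Set (Ω →ₘ[μ] ℝ)) : TopologicalSpace ↥P :=
  TopologicalSpace.induced
    (fun U : ↥P => fun W : ↥D => ip (U : Ω →ₘ[μ] ℝ) (W : Ω →ₘ[μ] ℝ))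
    Pi.topologicalSpace

/-- An admissible impact map `S : X → E`. -/
structure IsAdmissibleImpact {μ : Measure Ω} (XX XX' : Set (Fin d → (Ω →ₘ[μ] ℝ)))
    (EE EE' : Set (Ω →ₘ[μ] ℝ)) (S : (Fin d → (Ω →ₘ[μ] ℝ)) → (Ω →ₘ[μ] ℝ)) : Prop where
  mapsTo : ∀ X ∈ XX, S X ∈ EE
  nonconst : ∃ X ∈ XX, ∃ Y ∈ XX, S X ≠ S Y
  normalized : S 0 = 0
  mono : ∀ X ∈ XX, ∀ Y ∈ XX, X ≤ Y → S X ≤ S Y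
  concave : ∀ X ∈ XX, ∀ Y ∈ XX, ∀ t : ℝ, 0 ≤ t → t ≤ 1 →
      t • S X + (1 - t) • S Y ≤ S (t • X + (1 - t) • Y)
  usc : ∀ W ∈ EE', (0 : Ω →ₘ[μ] ℝ) ≤ W →
      @UpperSemicontinuous (↥XX) ℝ (wtop XX XX') _
        (fun X : ↥XX => ∫ ω, S (X : Fin d → (Ω →ₘ[μ] ℝ)) ω * W ω ∂μ)

/-- An admissible acceptance set `A ⊆ E` (relative to the impact map `S`). -/
structure IsAdmissibleAcceptance {μ : Measure Ω} (XX : Set (Fin d → (Ω →ₘ[μ] ℝ)))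
    (EE EE' : Set (Ω →ₘ[μ] ℝ)) (S : (Fin d → (Ω →ₘ[μ] ℝ)) → (Ω →ₘ[μ] ℝ))
    (A : Set (Ω →ₘ[μ] ℝ)) : Prop where
  subset : A ⊆ EE
  preimage_nonempty : ∃ X ∈ XX, S X ∈ A
  preimage_proper : ∃ X ∈ XX, S X ∉ A
  zero_mem : (0 : Ω →ₘ[μ] ℝ) ∈ A
  mono : ∀ U ∈ A, ∀ V ∈ EE, (0 : Ω →ₘ[μ] ℝ) ≤ V → U + V ∈ A
  convex : ∀ U ∈ A, ∀ V ∈ A, ∀ t : ℝ, 0 ≤ t → t ≤ 1 → t • U + (1 - t) • V ∈ A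
  closed : @IsClosed (↥EE) (wtop1 EE EE') {U : ↥EE | (U : Ω →ₘ[μ] ℝ) ∈ A}

/-- The systemic acceptance set `S⁻¹(A) = {X ∈ X : S(X) ∈ A}`. -/
def sysAcc {μ : Measure Ω} (XX : Set (Fin d → (Ω →ₘ[μ] ℝ)))
    (S : (Fin d → (Ω →ₘ[μ] ℝ)) → (Ω →ₘ[μ] ℝ)) (A : Set (Ω →ₘ[μ] ℝ)) :
    Set (Fin d → (Ω →ₘ[μ] ℝ)) :=
  {X ∈ XX | S X ∈ A}

/-- The "first allocate, then aggregate" systemic risk measure `ρ`. -/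
def rho (μ : Measure Ω) (S : (Fin d → (Ω →ₘ[μ] ℝ)) → (Ω →ₘ[μ] ℝ)) (A : Set (Ω →ₘ[μ] ℝ))
    (X : Fin d → (Ω →ₘ[μ] ℝ)) : EReal :=
  ⨅ m ∈ {m : Fin d → ℝ | S (X + cvec μ m) ∈ A}, ((∑ i, m i : ℝ) : EReal)

/-- The (lower) support function of a set of random vectors. -/
def suppV {μ : Measure Ω} (B : Set (Fin d → (Ω →ₘ[μ] ℝ))) (Z : Fin d → (Ω →ₘ[μ] ℝ)) : EReal :=
  ⨅ X ∈ B, ((pairing X Z : ℝ) : EReal)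

/-- The barrier cone of a set of random vectors, inside the dual set `D`. -/
def barrV {μ : Measure Ω} (B D : Set (Fin d → (Ω →ₘ[μ] ℝ))) : Set (Fin d → (Ω →ₘ[μ] ℝ)) :=
  {Z ∈ D | ⊥ < suppV B Z}

/-- The (lower) support function of a set of random variables. -/
def suppS {μ : Measure Ω} (A : Set (Ω →ₘ[μ] ℝ)) (W : Ω →ₘ[μ] ℝ) : EReal :=
  ⨅ U ∈ A, ((ip U W : ℝ) : EReal)

/-- The barrier cone of a set of random variables, inside the dual set `D`. -/
def barrS {μ : Measure Ω} (A D : Set (Ω →ₘ[μ] ℝ)) : Set (Ω →ₘ[μ] ℝ) :=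
  {W ∈ D | ⊥ < suppS A W}

/-- The generic penalty function with dual variables `W` ranging over `K`. -/
def penalty {μ : Measure Ω} (XX : Set (Fin d → (Ω →ₘ[μ] ℝ)))
    (A : Set (Ω →ₘ[μ] ℝ)) (S : (Fin d → (Ω →ₘ[μ] ℝ)) → (Ω →ₘ[μ] ℝ))
    (K : Set (Ω →ₘ[μ] ℝ)) (Z : Fin d → (Ω →ₘ[μ] ℝ)) : EReal :=
  ⨆ W ∈ K, (suppS A W +
    ⨅ X ∈ XX, ((pairing X Z - ∫ ω, S X ω * W ω ∂μ : ℝ) : EReal))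

/-- a.s. strictly positive random variables. -/
def strictPos (μ : Measure Ω) : Set (Ω →ₘ[μ] ℝ) := {W | ∀ᵐ ω ∂μ, 0 < W ω}

/-- The penalty function `α`. -/
def alpha {μ : Measure Ω} (XX : Set (Fin d → (Ω →ₘ[μ] ℝ))) (EE' : Set (Ω →ₘ[μ] ℝ))
    (A : Set (Ω →ₘ[μ] ℝ)) (S : (Fin d → (Ω →ₘ[μ] ℝ)) → (Ω →ₘ[μ] ℝ)) :
    (Fin d → (Ω →ₘ[μ] ℝ)) → EReal :=
  penalty XX A S (barrS A EE')

/-- The penalty function `α⁺`. -/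
def alphaPlus {μ : Measure Ω} (XX : Set (Fin d → (Ω →ₘ[μ] ℝ))) (EE' : Set (Ω →ₘ[μ] ℝ))
    (A : Set (Ω →ₘ[μ] ℝ)) (S : (Fin d → (Ω →ₘ[μ] ℝ)) → (Ω →ₘ[μ] ℝ)) :
    (Fin d → (Ω →ₘ[μ] ℝ)) → EReal :=
  penalty XX A S (barrS A EE' ∩ (strictPos μ ∪ {0}))

/-- a.s. strictly positive random vectors. -/
def strictPosV (μ : Measure Ω) (d : ℕ) : Set (Fin d → (Ω →ₘ[μ] ℝ)) :=
  {Z | ∀ i, ∀ᵐ ω ∂μ, 0 < Z i ω}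

/-- The set `C` of nonnegative dual vectors with all components of expectation one. -/
def Cset {μ : Measure Ω} (XX' : Set (Fin d → (Ω →ₘ[μ] ℝ))) : Set (Fin d → (Ω →ₘ[μ] ℝ)) :=
  {Z ∈ XX' | (∀ i, (0 : Ω →ₘ[μ] ℝ) ≤ Z i) ∧ ∀ i, (∫ ω, Z i ω ∂μ) = 1}

/-- A map with values in `[−∞,∞]` is proper on `P` if it never attains `−∞` on `P`
and is finite somewhere on `P`. -/
def ProperOn {β : Type*} (P : Set β) (f : β → EReal) : Prop :=
  (∀ x ∈ P, f x ≠ ⊥) ∧ ∃ x ∈ P, f x ≠ ⊤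

/-- The positive part of an extended real number, as an extended nonnegative real. -/
def epos (x : EReal) : ℝ≥0∞ := if x = ⊤ then ⊤ else ENNReal.ofReal x.toReal

/-- The integral of an extended-real-valued function. -/
def eintegral (μ : Measure Ω) (g : Ω → EReal) : EReal :=
  ((∫⁻ ω, epos (g ω) ∂μ : ℝ≥0∞) : EReal) - ((∫⁻ ω, epos (-(g ω)) ∂μ : ℝ≥0∞) : EReal)


section Aux
set_option linter.unusedSectionVars false

open MeasureTheory Filter Set Topology

variable {Ω : Type*} [MeasurableSpace Ω] {μ : Measure Ω} [IsProbabilityMeasure μ] {d : ℕ}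
variable {Li : Fin d → Set (Ω →ₘ[μ] ℝ)} {nrmX : Fin d → ((Ω →ₘ[μ] ℝ) → ℝ)}
variable {EE : Set (Ω →ₘ[μ] ℝ)} {nrmE : (Ω →ₘ[μ] ℝ) → ℝ}
variable {S : (Fin d → (Ω →ₘ[μ] ℝ)) → (Ω →ₘ[μ] ℝ)} {A : Set (Ω →ₘ[μ] ℝ)}

lemma essBdd_const (r : ℝ) : EssBdd (AEEqFun.const Ω r : Ω →ₘ[μ] ℝ) := by
  refine ⟨|r|, ?_⟩
  filter_upwards [AEEqFun.coeFn_const Ω r] with ω hω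
  rw [hω]; exact le_refl _

lemma const_mem {L : Set (Ω →ₘ[μ] ℝ)} {nrm} (hL : IsAdmissible L nrm) (r : ℝ) :
    (AEEqFun.const Ω r : Ω →ₘ[μ] ℝ) ∈ L :=
  hL.linfty_subset _ (essBdd_const r)

lemma cvec_mem (hLi : ∀ i, IsAdmissible (Li i) (nrmX i)) (m : Fin d → ℝ) :
    cvec μ m ∈ prodSet Li := fun i => const_mem (hLi i) (m i)

lemma cvec_zero : cvec μ (0 : Fin d → ℝ) = 0 := by
  funext i
  show (AEEqFun.const Ω (0:ℝ) : Ω →ₘ[μ] ℝ) = 0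
  apply AEEqFun.ext
  filter_upwards [AEEqFun.coeFn_const Ω (0:ℝ),
    (AEEqFun.coeFn_zero : ((0 : Ω →ₘ[μ] ℝ) : Ω → ℝ) =ᵐ[μ] 0)] with ω h1 h2
  rw [h1, h2]; rfl

lemma prod_add_mem (hLi : ∀ i, IsAdmissible (Li i) (nrmX i)) {X Y : Fin d → (Ω →ₘ[μ] ℝ)}
    (hX : X ∈ prodSet Li) (hY : Y ∈ prodSet Li) : X + Y ∈ prodSet Li :=
  fun i => (hLi i).add_mem _ (hX i) _ (hY i)

lemma prod_smul_mem (hLi : ∀ i, IsAdmissible (Li i) (nrmX i)) (c : ℝ) {X : Fin d → (Ω →ₘ[μ] ℝ)}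
    (hX : X ∈ prodSet Li) : c • X ∈ prodSet Li :=
  fun i => (hLi i).smul_mem c _ (hX i)

lemma prod_zero_mem (hLi : ∀ i, IsAdmissible (Li i) (nrmX i)) :
    (0 : Fin d → (Ω →ₘ[μ] ℝ)) ∈ prodSet Li := fun i => (hLi i).zero_mem

lemma mem_sub {L : Set (Ω →ₘ[μ] ℝ)} {nrm} (hL : IsAdmissible L nrm)
    {U V : Ω →ₘ[μ] ℝ} (hU : U ∈ L) (hV : V ∈ L) : U - V ∈ L := by
  have : U - V = U + (-1 : ℝ) • V := by rw [neg_one_smul]; abel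
  rw [this]
  exact hL.add_mem _ hU _ (hL.smul_mem _ _ hV)

lemma integrable_of_kdual {L : Set (Ω →ₘ[μ] ℝ)} {nrm} (hL : IsAdmissible L nrm)
    {W : Ω →ₘ[μ] ℝ} (hW : W ∈ kdual L) : Integrable W μ := by
  have h1 := hW _ (const_mem hL 1)
  have : (fun ω => (AEEqFun.const Ω (1:ℝ) : Ω →ₘ[μ] ℝ) ω * W ω) =ᵐ[μ] fun ω => W ω := by
    filter_upwards [AEEqFun.coeFn_const Ω (1:ℝ)] with ω hω
    rw [hω]; simp [Function.const]
  exact (integrable_congr this).mp h1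

lemma ip_add {U V W : Ω →ₘ[μ] ℝ} (hU : Integrable (fun ω => U ω * W ω) μ)
    (hV : Integrable (fun ω => V ω * W ω) μ) : ip (U + V) W = ip U W + ip V W := by
  unfold ip
  rw [← integral_add hU hV]
  apply integral_congr_ae
  filter_upwards [AEEqFun.coeFn_add U V] with ω hω
  rw [hω]; simp [add_mul]

lemma ip_smul (c : ℝ) (U W : Ω →ₘ[μ] ℝ) : ip (c • U) W = c * ip U W := by
  unfold ip
  rw [← integral_const_mul]
  apply integral_congr_ae
  filter_upwards [AEEqFun.coeFn_smul c U] with ω hω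
  rw [hω]; simp [mul_assoc]

lemma ip_const (r : ℝ) (W : Ω →ₘ[μ] ℝ) : ip (AEEqFun.const Ω r) W = r * ∫ ω, W ω ∂μ := by
  unfold ip
  rw [← integral_const_mul]
  apply integral_congr_ae
  filter_upwards [AEEqFun.coeFn_const Ω r] with ω hω
  rw [hω]; simp [Function.const]

end Aux
section Aux2
set_option linter.unusedSectionVars false

open MeasureTheory Filter Set Topology

variable {Ω : Type*} [MeasurableSpace Ω] {μ : Measure Ω} [IsProbabilityMeasure μ] {d : ℕ}
variable {Li : Fin d → Set (Ω →ₘ[μ] ℝ)} {nrmX : Fin d → ((Ω →ₘ[μ] ℝ) → ℝ)}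
variable {EE : Set (Ω →ₘ[μ] ℝ)} {nrmE : (Ω →ₘ[μ] ℝ) → ℝ}
variable {S : (Fin d → (Ω →ₘ[μ] ℝ)) → (Ω →ₘ[μ] ℝ)} {A : Set (Ω →ₘ[μ] ℝ)}

lemma pairing_add {X Y Z : Fin d → (Ω →ₘ[μ] ℝ)}
    (hX : ∀ i, Integrable (fun ω => X i ω * Z i ω) μ)
    (hY : ∀ i, Integrable (fun ω => Y i ω * Z i ω) μ) :
    pairing (X + Y) Z = pairing X Z + pairing Y Z := by
  unfold pairing
  rw [← Finset.sum_add_distrib]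
  exact Finset.sum_congr rfl fun i _ => ip_add (hX i) (hY i)

lemma pairing_smul (c : ℝ) (X Z : Fin d → (Ω →ₘ[μ] ℝ)) :
    pairing (c • X) Z = c * pairing X Z := by
  unfold pairing
  rw [Finset.mul_sum]
  exact Finset.sum_congr rfl fun i _ => ip_smul c (X i) (Z i)

lemma pairing_cvec (m : Fin d → ℝ) (Z : Fin d → (Ω →ₘ[μ] ℝ)) :
    pairing (cvec μ m) Z = ∑ i, m i * ∫ ω, Z i ω ∂μ :=
  Finset.sum_congr rfl fun i _ => ip_const (m i) (Z i)

lemma le_ae {f g : Ω →ₘ[μ] ℝ} (h : f ≤ g) : ∀ᵐ ω ∂μ, f ω ≤ g ω :=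
  AEEqFun.coeFn_le.mpr h

lemma ae_le {f g : Ω →ₘ[μ] ℝ} (h : ∀ᵐ ω ∂μ, f ω ≤ g ω) : f ≤ g :=
  AEEqFun.coeFn_le.mp h

lemma sub_nonneg_ae {U V : Ω →ₘ[μ] ℝ} (h : U ≤ V) : (0 : Ω →ₘ[μ] ℝ) ≤ V - U := by
  apply ae_le
  filter_upwards [le_ae h, AEEqFun.coeFn_sub V U,
    (AEEqFun.coeFn_zero : ((0 : Ω →ₘ[μ] ℝ) : Ω → ℝ) =ᵐ[μ] 0)] with ω h1 h2 h3
  rw [h2, h3]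
  simp only [Pi.sub_apply, Pi.zero_apply]
  linarith

lemma const_le_const {r s : ℝ} (h : r ≤ s) :
    (AEEqFun.const Ω r : Ω →ₘ[μ] ℝ) ≤ AEEqFun.const Ω s := by
  apply ae_le
  filter_upwards [AEEqFun.coeFn_const Ω r, AEEqFun.coeFn_const Ω s] with ω h1 h2
  rw [h1, h2]; exact h

lemma smul_nonneg_ae {t : ℝ} (ht : 0 ≤ t) {V : Ω →ₘ[μ] ℝ} (hV : (0 : Ω →ₘ[μ] ℝ) ≤ V) :
    (0 : Ω →ₘ[μ] ℝ) ≤ t • V := by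
  apply ae_le
  filter_upwards [le_ae hV, AEEqFun.coeFn_smul t V,
    (AEEqFun.coeFn_zero : ((0 : Ω →ₘ[μ] ℝ) : Ω → ℝ) =ᵐ[μ] 0)] with ω h1 h2 h3
  rw [h3] at h1 ⊢
  rw [h2]
  simp only [Pi.zero_apply] at h1 ⊢
  simp only [Pi.smul_apply, smul_eq_mul]
  exact mul_nonneg ht h1

lemma A_absorb (hE : IsAdmissible EE nrmE)
    (hA : IsAdmissibleAcceptance (prodSet Li) EE (kdual EE) S A)
    {U V : Ω →ₘ[μ] ℝ} (hU : U ∈ A) (hVE : V ∈ EE) (hUV : U ≤ V) : V ∈ A := by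
  have hUE : U ∈ EE := hA.subset hU
  have h2 : V - U ∈ EE := mem_sub hE hVE hUE
  have h3 := hA.mono U hU _ h2 (sub_nonneg_ae hUV)
  have h4 : U + (V - U) = V := by abel
  rwa [h4] at h3

lemma acc_mono (hE : IsAdmissible EE nrmE)
    (hS : IsAdmissibleImpact (prodSet Li) (prodSet fun i => kdual (Li i)) EE (kdual EE) S)
    (hA : IsAdmissibleAcceptance (prodSet Li) EE (kdual EE) S A)
    {X Y : Fin d → (Ω →ₘ[μ] ℝ)} (hX : X ∈ prodSet Li) (hY : Y ∈ prodSet Li)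
    (hXY : X ≤ Y) (hSX : S X ∈ A) : S Y ∈ A :=
  A_absorb hE hA hSX (hS.mapsTo Y hY) (hS.mono X hX Y hY hXY)

lemma acc_conv (hLi : ∀ i, IsAdmissible (Li i) (nrmX i)) (hE : IsAdmissible EE nrmE)
    (hS : IsAdmissibleImpact (prodSet Li) (prodSet fun i => kdual (Li i)) EE (kdual EE) S)
    (hA : IsAdmissibleAcceptance (prodSet Li) EE (kdual EE) S A)
    {X Y : Fin d → (Ω →ₘ[μ] ℝ)} (hX : X ∈ prodSet Li) (hY : Y ∈ prodSet Li)
    (hSX : S X ∈ A) (hSY : S Y ∈ A) {t : ℝ} (ht0 : 0 ≤ t) (ht1 : t ≤ 1) :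
    (t • X + (1 - t) • Y ∈ prodSet Li) ∧ S (t • X + (1 - t) • Y) ∈ A := by
  have hmem := prod_add_mem hLi (prod_smul_mem hLi t hX) (prod_smul_mem hLi (1 - t) hY)
  have hcomb := hS.concave X hX Y hY t ht0 ht1
  have hAcomb := hA.convex _ hSX _ hSY t ht0 ht1
  exact ⟨hmem, A_absorb hE hA hAcomb (hS.mapsTo _ hmem) hcomb⟩

lemma acc_smul (hLi : ∀ i, IsAdmissible (Li i) (nrmX i)) (hE : IsAdmissible EE nrmE)
    (hS : IsAdmissibleImpact (prodSet Li) (prodSet fun i => kdual (Li i)) EE (kdual EE) S)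
    (hA : IsAdmissibleAcceptance (prodSet Li) EE (kdual EE) S A)
    {Y : Fin d → (Ω →ₘ[μ] ℝ)} (hY : Y ∈ prodSet Li) (hSY : S Y ∈ A)
    {t : ℝ} (ht0 : 0 ≤ t) (ht1 : t ≤ 1) :
    (t • Y ∈ prodSet Li) ∧ S (t • Y) ∈ A := by
  have h0A : S (0 : Fin d → (Ω →ₘ[μ] ℝ)) ∈ A := by rw [hS.normalized]; exact hA.zero_mem
  have h := acc_conv hLi hE hS hA hY (prod_zero_mem hLi) hSY h0A ht0 ht1
  rwa [smul_zero, add_zero] at h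

lemma continuous_pairingZ (Z : ↥(prodSet fun i => kdual (Li i))) :
    @Continuous _ _ (wtop (prodSet Li) (prodSet fun i => kdual (Li i))) _
      (fun X : ↥(prodSet Li) => pairing (X : Fin d → (Ω →ₘ[μ] ℝ)) (Z : Fin d → (Ω →ₘ[μ] ℝ))) := by
  letI := wtop (prodSet Li) (prodSet fun i => kdual (Li i))
  have h1 : Continuous (fun g : (↥(prodSet fun i => kdual (Li i)) → ℝ) => g Z) :=
    continuous_apply Z
  have h2 : @Continuous _ _ (wtop (prodSet Li) (prodSet fun i => kdual (Li i)))
      Pi.topologicalSpace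
      (fun X : ↥(prodSet Li) => fun Z : ↥(prodSet fun i => kdual (Li i)) =>
        pairing (X : Fin d → (Ω →ₘ[μ] ℝ)) (Z : Fin d → (Ω →ₘ[μ] ℝ))) :=
    continuous_induced_dom
  exact h1.comp h2

lemma tendsto_wtop_iff {ι : Type*} {F : Filter ι} {f : ι → ↥(prodSet Li)} {x : ↥(prodSet Li)} :
    Tendsto f F (@nhds _ (wtop (prodSet Li) (prodSet fun i => kdual (Li i))) x) ↔
      ∀ Z : ↥(prodSet fun i => kdual (Li i)),
        Tendsto (fun i => pairing ((f i : Fin d → (Ω →ₘ[μ] ℝ))) (Z : Fin d → (Ω →ₘ[μ] ℝ))) F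
          (@nhds ℝ _ (pairing (x : Fin d → (Ω →ₘ[μ] ℝ)) (Z : Fin d → (Ω →ₘ[μ] ℝ)))) := by
  have hn : (@nhds _ (wtop (prodSet Li) (prodSet fun i => kdual (Li i))) x) =
      comap (fun X : ↥(prodSet Li) => fun Z : ↥(prodSet fun i => kdual (Li i)) =>
        pairing (X : Fin d → (Ω →ₘ[μ] ℝ)) (Z : Fin d → (Ω →ₘ[μ] ℝ)))
        (@nhds _ Pi.topologicalSpace
          (fun Z : ↥(prodSet fun i => kdual (Li i)) =>
            pairing (x : Fin d → (Ω →ₘ[μ] ℝ)) (Z : Fin d → (Ω →ₘ[μ] ℝ)))) :=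
    @nhds_induced _ _ Pi.topologicalSpace _ x
  rw [hn, tendsto_comap_iff]
  exact tendsto_pi_nhds

end Aux2
section Aux3
set_option linter.unusedSectionVars false
set_option maxHeartbeats 1000000

open MeasureTheory Filter Set Topology

variable {Ω : Type*} [MeasurableSpace Ω] {μ : Measure Ω} [IsProbabilityMeasure μ] {d : ℕ}
variable {Li : Fin d → Set (Ω →ₘ[μ] ℝ)} {nrmX : Fin d → ((Ω →ₘ[μ] ℝ) → ℝ)}
variable {EE : Set (Ω →ₘ[μ] ℝ)} {nrmE : (Ω →ₘ[μ] ℝ) → ℝ}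
variable {S : (Fin d → (Ω →ₘ[μ] ℝ)) → (Ω →ₘ[μ] ℝ)} {A : Set (Ω →ₘ[μ] ℝ)}

lemma integ_smul_mul {U W : Ω →ₘ[μ] ℝ} (c : ℝ)
    (h : Integrable (fun ω => U ω * W ω) μ) :
    Integrable (fun ω => (c • U) ω * W ω) μ := by
  apply (Integrable.const_mul h c).congr
  filter_upwards [AEEqFun.coeFn_smul c U] with ω hω
  rw [hω]; simp [mul_assoc]

lemma coeFn_sum_smul {κ : Type*} (s : Finset κ) (c : κ → ℝ) (Z : κ → (Ω →ₘ[μ] ℝ)) :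
    ((∑ j ∈ s, c j • Z j : Ω →ₘ[μ] ℝ) : Ω → ℝ) =ᵐ[μ] fun ω => ∑ j ∈ s, c j * (Z j ω) := by
  classical
  induction s using Finset.induction_on with
  | empty =>
      simp only [Finset.sum_empty]
      exact (AEEqFun.coeFn_zero : ((0 : Ω →ₘ[μ] ℝ) : Ω → ℝ) =ᵐ[μ] 0)
  | insert _ _ hx ih =>
      rename_i a s'
      rw [Finset.sum_insert hx]
      filter_upwards [AEEqFun.coeFn_add (c a • Z a) (∑ j ∈ s', c j • Z j),
        AEEqFun.coeFn_smul (c a) (Z a), ih] with ω h1 h2 h3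
      rw [h1]
      simp only [Pi.add_apply, Finset.sum_insert hx, h3]
      rw [h2]; simp

lemma ip_eq_zero_of_ae_zero {U W : Ω →ₘ[μ] ℝ} (h : (W : Ω → ℝ) =ᵐ[μ] 0) : ip U W = 0 := by
  unfold ip
  rw [← integral_zero Ω ℝ (μ := μ)]
  apply integral_congr_ae
  filter_upwards [h] with ω hω
  rw [hω]; simp

/-- The key finite-dimensional separation lemma on the `E` side. -/
lemma sep_E (hE : IsAdmissible EE nrmE)
    (hA : IsAdmissibleAcceptance (prodSet Li) EE (kdual EE) S A)
    {U₀ : Ω →ₘ[μ] ℝ} (hU₀E : U₀ ∈ EE) (hU₀ : U₀ ∉ A) :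
    ∃ W ∈ kdual EE, ((0 : Ω →ₘ[μ] ℝ) ≤ W) ∧ ∃ β : ℝ,
      ip U₀ W < β ∧ ∀ U ∈ A, β ≤ ip U W := by
  classical
  set D := kdual EE with hD
  set Φ : ↥EE → (↥D → ℝ) := fun U Z => ip (U : Ω →ₘ[μ] ℝ) (Z : Ω →ₘ[μ] ℝ) with hΦ
  set u₀ : ↥EE := ⟨U₀, hU₀E⟩ with hu₀
  -- extract a basic neighborhood
  letI : TopologicalSpace ↥EE := wtop1 EE D
  have hopen : IsOpen {U : ↥EE | (U : Ω →ₘ[μ] ℝ) ∈ A}ᶜ := hA.closed.isOpen_compl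
  have hmemnhds : {U : ↥EE | (U : Ω →ₘ[μ] ℝ) ∈ A}ᶜ ∈ @nhds _ (wtop1 EE D) u₀ :=
    hopen.mem_nhds (by exact hU₀)
  have hn : (@nhds _ (wtop1 EE D) u₀) = comap Φ (@nhds _ Pi.topologicalSpace (Φ u₀)) :=
    @nhds_induced _ _ Pi.topologicalSpace Φ u₀
  rw [hn, mem_comap] at hmemnhds
  obtain ⟨s, hs, hssub⟩ := hmemnhds
  rw [@nhds_pi _ _ _ (Φ u₀), Filter.mem_pi] at hs
  obtain ⟨I, hIfin, t, ht, hIt⟩ := hs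
  choose εf hεpos hball using fun W => Metric.mem_nhds_iff.mp (ht W)
  set J : Finset ↥D := hIfin.toFinset with hJ
  -- key estimate
  have hKey : ∀ U ∈ A, ∃ W ∈ J, εf W ≤ |ip U (W : Ω →ₘ[μ] ℝ) - ip U₀ (W : Ω →ₘ[μ] ℝ)| := by
    intro U hU
    by_contra hcon
    push_neg at hcon
    have hmem : Φ ⟨U, hA.subset hU⟩ ∈ I.pi t := by
      intro W hWI
      apply hball W
      have hWJ : W ∈ J := hIfin.mem_toFinset.mpr hWI
      have := hcon W hWJ
      simpa only [Metric.mem_ball, Real.dist_eq] using this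
    have : (⟨U, hA.subset hU⟩ : ↥EE) ∈ Φ ⁻¹' s := hIt hmem
    exact (hssub this) hU
  -- J nonempty
  rcases J.eq_empty_or_nonempty with hJe | hJne
  · exfalso
    obtain ⟨W, hWJ, -⟩ := hKey 0 hA.zero_mem
    rw [hJe] at hWJ
    exact absurd hWJ (Finset.notMem_empty W)
  set ε : ℝ := J.inf' hJne εf with hε
  have hεpos' : 0 < ε := by
    rw [hε, Finset.lt_inf'_iff]
    exact fun W _ => hεpos W
  -- finite-dimensional image
  set φ : (Ω →ₘ[μ] ℝ) → (↥J → ℝ) := fun U j => ip U ((j : ↥D) : Ω →ₘ[μ] ℝ) with hφ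
  set C : Set (↥J → ℝ) := φ '' A with hC
  have hCconv : Convex ℝ C := by
    rintro x ⟨U, hU, rfl⟩ y ⟨V, hV, rfl⟩ a b ha hb hab
    refine ⟨a • U + b • V, ?_, ?_⟩
    · have := hA.convex U hU V hV a ha (by linarith)
      rwa [show (1 - a) = b by linarith] at this
    · funext j
      have hUi : Integrable (fun ω => U ω * ((j : ↥D) : Ω →ₘ[μ] ℝ) ω) μ :=
        (j : ↥D).2 _ (hA.subset hU)
      have hVi : Integrable (fun ω => V ω * ((j : ↥D) : Ω →ₘ[μ] ℝ) ω) μ :=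
        (j : ↥D).2 _ (hA.subset hV)
      simp only [hφ, Pi.add_apply, Pi.smul_apply, smul_eq_mul]
      rw [ip_add (integ_smul_mul a hUi) (integ_smul_mul b hVi), ip_smul, ip_smul]
  have hsep : φ U₀ ∉ closure C := by
    intro hmem
    obtain ⟨y, hyC, hdist⟩ := Metric.mem_closure_iff.mp hmem ε hεpos'
    obtain ⟨U, hU, rfl⟩ := hyC
    obtain ⟨W, hWJ, hWge⟩ := hKey U hU
    have h1 : dist (φ U₀ ⟨W, hWJ⟩) (φ U ⟨W, hWJ⟩) ≤ dist (φ U₀) (φ U) :=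
      dist_le_pi_dist (φ U₀) (φ U) ⟨W, hWJ⟩
    have h2 : dist (φ U₀ ⟨W, hWJ⟩) (φ U ⟨W, hWJ⟩) =
        |ip U ((W : Ω →ₘ[μ] ℝ)) - ip U₀ ((W : Ω →ₘ[μ] ℝ))| := by
      rw [Real.dist_eq, abs_sub_comm]
    have h3 : ε ≤ εf W := Finset.inf'_le εf hWJ
    rw [h2] at h1
    linarith [hdist, le_trans (le_trans h3 hWge) h1]
  obtain ⟨f, u, hfu, hu⟩ :=
    geometric_hahn_banach_closed_point hCconv.closure isClosed_closure hsep
  set c : ↥J → ℝ := fun j => f (fun k => if j = k then 1 else 0) with hc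
  have hfx : ∀ x : ↥J → ℝ, f x = ∑ j, x j * c j := by
    intro x
    conv_lhs => rw [pi_eq_sum_univ x]
    rw [map_sum]
    exact Finset.sum_congr rfl fun j _ => by rw [_root_.map_smul]; simp [hc]
  set W : Ω →ₘ[μ] ℝ := ∑ j : ↥J, (-(c j)) • (((j : ↥D) : Ω →ₘ[μ] ℝ)) with hW
  have hWkd : W ∈ kdual EE := by
    intro g hg
    have hint : ∀ j : ↥J, Integrable (fun ω => (-(c j)) * (g ω * ((j : ↥D) : Ω →ₘ[μ] ℝ) ω)) μ :=
      fun j => ((j : ↥D).2 g hg).const_mul _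
    apply (integrable_finset_sum Finset.univ (fun j _ => hint j)).congr
    filter_upwards [coeFn_sum_smul (μ := μ) Finset.univ (fun j : ↥J => -(c j))
      (fun j : ↥J => ((j : ↥D) : Ω →ₘ[μ] ℝ))] with ω hω
    rw [hω, Finset.mul_sum]
    exact Finset.sum_congr rfl fun j _ => by ring
  have hip : ∀ U ∈ EE, ip U W = -(f (φ U)) := by
    intro U hU
    have h1 : ip U W = ∑ j : ↥J, (-(c j)) * ip U (((j : ↥D) : Ω →ₘ[μ] ℝ)) := by
      unfold ip
      have h2 : (fun ω => U ω * W ω) =ᵐ[μ]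
          fun ω => ∑ j : ↥J, (-(c j)) * (U ω * ((j : ↥D) : Ω →ₘ[μ] ℝ) ω) := by
        filter_upwards [coeFn_sum_smul (μ := μ) Finset.univ (fun j : ↥J => -(c j))
          (fun j : ↥J => ((j : ↥D) : Ω →ₘ[μ] ℝ))] with ω hω
        rw [hω, Finset.mul_sum]
        exact Finset.sum_congr rfl fun j _ => by ring
      rw [integral_congr_ae h2,
        integral_finset_sum (Finset.univ : Finset ↥J)
          (fun j _ => ((j : ↥D).2 U hU).const_mul _)]
      exact Finset.sum_congr rfl fun j _ => integral_const_mul _ _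
    rw [h1, hfx (φ U), ← Finset.sum_neg_distrib]
    exact Finset.sum_congr rfl fun j _ => by simp [hφ]; ring
  refine ⟨W, hWkd, ?_, -u, ?_, ?_⟩
  · -- nonnegativity of W
    have hWpos : ∀ V ∈ EE, (0 : Ω →ₘ[μ] ℝ) ≤ V → 0 ≤ ip V W := by
      intro V hVE hV0
      by_contra hneg
      push_neg at hneg
      set v : ℝ := ip V W with hv
      set t₀ : ℝ := (|u| + 1) / (-v) with ht₀
      have hvne : v ≠ 0 := ne_of_lt hneg
      have ht₀pos : 0 < t₀ := div_pos (by positivity) (by linarith)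
      have htV : t₀ • V ∈ A := by
        have := hA.mono 0 hA.zero_mem (t₀ • V) (hE.smul_mem t₀ V hVE)
          (smul_nonneg_ae (le_of_lt ht₀pos) hV0)
        rwa [zero_add] at this
      have h5 : f (φ (t₀ • V)) < u := hfu _ (subset_closure ⟨_, htV, rfl⟩)
      have h6 : ip (t₀ • V) W = -(f (φ (t₀ • V))) := hip _ (hE.smul_mem t₀ V hVE)
      have h7 : ip (t₀ • V) W = t₀ * v := by rw [ip_smul]
      have h8 : t₀ * v = -(|u| + 1) := by
        rw [ht₀, div_mul_eq_mul_div, div_eq_iff (show -v ≠ 0 by linarith)]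
        ring
      have h9 : -u ≤ t₀ * v := by rw [h7] at h6; linarith
      rw [h8] at h9
      have := le_abs_self u
      have := neg_abs_le u
      linarith
    -- indicator argument
    have hWam : AEMeasurable (W : Ω → ℝ) μ := W.aemeasurable
    set g : Ω → ℝ := hWam.mk _ with hg
    have hgmeas : Measurable g := hWam.measurable_mk
    have hgae : (W : Ω → ℝ) =ᵐ[μ] g := hWam.ae_eq_mk
    set V₀ : Ω → ℝ := Set.indicator {ω | g ω < 0} (fun _ => 1) with hV₀
    have hV₀meas : Measurable V₀ :=
      measurable_const.indicator (measurableSet_lt hgmeas measurable_const)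
    set V : Ω →ₘ[μ] ℝ := AEEqFun.mk V₀ hV₀meas.aestronglyMeasurable with hVdef
    have hVco : (V : Ω → ℝ) =ᵐ[μ] V₀ := AEEqFun.coeFn_mk _ _
    have hVE : V ∈ EE := by
      apply hE.linfty_subset
      refine ⟨1, ?_⟩
      filter_upwards [hVco] with ω hω
      rw [hω, hV₀]
      rw [Set.indicator_apply]
      split_ifs <;> simp
    have hV0 : (0 : Ω →ₘ[μ] ℝ) ≤ V := by
      apply ae_le
      filter_upwards [hVco, (AEEqFun.coeFn_zero : ((0 : Ω →ₘ[μ] ℝ) : Ω → ℝ) =ᵐ[μ] 0)]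
        with ω h1 h2
      rw [h1, h2, hV₀, Set.indicator_apply]
      split_ifs <;> simp
    have hipnn : 0 ≤ ip V W := hWpos V hVE hV0
    have hintVW : Integrable (fun ω => V ω * W ω) μ := hWkd V hVE
    set F : Ω → ℝ := fun ω => V₀ ω * g ω with hF
    have hFae : (fun ω => V ω * W ω) =ᵐ[μ] F := by
      filter_upwards [hVco, hgae] with ω h1 h2
      rw [hF, h1, h2]
    have hintF : Integrable F μ := hintVW.congr hFae
    have hFint_nn : 0 ≤ ∫ ω, F ω ∂μ := by
      rw [← integral_congr_ae hFae]
      exact hipnn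
    have hFnonpos : ∀ ω, F ω ≤ 0 := by
      intro ω
      show V₀ ω * g ω ≤ 0
      rw [hV₀, Set.indicator_apply]
      split_ifs with h
      · simp only [Set.mem_setOf_eq] at h
        nlinarith
      · simp
    have hFzero : F =ᵐ[μ] 0 := by
      have h1 : (0:ℝ) ≤ ∫ ω, -F ω ∂μ :=
        integral_nonneg fun ω => by simpa using neg_nonneg.mpr (hFnonpos ω)
      have h2 : ∫ ω, -F ω ∂μ = -∫ ω, F ω ∂μ := integral_neg F
      have h3 : ∫ ω, -F ω ∂μ = 0 := by linarith
      have h4 := (integral_eq_zero_iff_of_nonneg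
        (fun ω => by simpa using neg_nonneg.mpr (hFnonpos ω) : 0 ≤ (fun ω => -F ω))
        hintF.neg).mp h3
      filter_upwards [h4] with ω hω
      simp only [Pi.zero_apply] at hω ⊢
      linarith
    apply ae_le
    filter_upwards [hFzero, hgae, (AEEqFun.coeFn_zero : ((0 : Ω →ₘ[μ] ℝ) : Ω → ℝ) =ᵐ[μ] 0)]
      with ω h1 h2 h3
    rw [h3, h2]
    simp only [Pi.zero_apply]
    by_contra hlt
    push_neg at hlt
    have : F ω = g ω := by
      show V₀ ω * g ω = g ω
      rw [hV₀, Set.indicator_of_mem (show ω ∈ {ω | g ω < 0} from hlt)]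
      ring
    rw [Pi.zero_apply] at h1
    rw [this] at h1
    linarith
  · -- strict inequality at U₀
    rw [hip U₀ hU₀E]
    linarith
  · -- lower bound on A
    intro U hU
    rw [hip U (hA.subset hU)]
    have := hfu (φ U) (subset_closure ⟨U, hU, rfl⟩)
    linarith

end Aux3
section Aux4
set_option linter.unusedSectionVars false
set_option maxHeartbeats 1000000

open MeasureTheory Filter Set Topology

variable {Ω : Type*} [MeasurableSpace Ω] {μ : Measure Ω} [IsProbabilityMeasure μ] {d : ℕ}
variable {Li : Fin d → Set (Ω →ₘ[μ] ℝ)} {nrmX : Fin d → ((Ω →ₘ[μ] ℝ) → ℝ)}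
variable {EE : Set (Ω →ₘ[μ] ℝ)} {nrmE : (Ω →ₘ[μ] ℝ) → ℝ}
variable {S : (Fin d → (Ω →ₘ[μ] ℝ)) → (Ω →ₘ[μ] ℝ)} {A : Set (Ω →ₘ[μ] ℝ)}

lemma ip_zero_left (W : Ω →ₘ[μ] ℝ) : ip (0 : Ω →ₘ[μ] ℝ) W = 0 := by
  unfold ip
  rw [← integral_zero Ω ℝ (μ := μ)]
  apply integral_congr_ae
  filter_upwards [(AEEqFun.coeFn_zero : ((0 : Ω →ₘ[μ] ℝ) : Ω → ℝ) =ᵐ[μ] 0)] with ω hω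
  rw [hω]; simp

/-- If the pairing of `W` against every nonnegative element of `L` is nonnegative,
then `W` is nonnegative. -/
lemma nonneg_of_ip_nonneg {L : Set (Ω →ₘ[μ] ℝ)} {nrm : (Ω →ₘ[μ] ℝ) → ℝ}
    (hL : IsAdmissible L nrm) {W : Ω →ₘ[μ] ℝ} (hWkd : W ∈ kdual L)
    (hpos : ∀ V ∈ L, (0 : Ω →ₘ[μ] ℝ) ≤ V → 0 ≤ ip V W) : (0 : Ω →ₘ[μ] ℝ) ≤ W := by
  classical
  have hWam : AEMeasurable (W : Ω → ℝ) μ := W.aemeasurable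
  set g : Ω → ℝ := hWam.mk _ with hg
  have hgmeas : Measurable g := hWam.measurable_mk
  have hgae : (W : Ω → ℝ) =ᵐ[μ] g := hWam.ae_eq_mk
  set V₀ : Ω → ℝ := Set.indicator {ω | g ω < 0} (fun _ => 1) with hV₀
  have hV₀meas : Measurable V₀ :=
    measurable_const.indicator (measurableSet_lt hgmeas measurable_const)
  set V : Ω →ₘ[μ] ℝ := AEEqFun.mk V₀ hV₀meas.aestronglyMeasurable with hVdef
  have hVco : (V : Ω → ℝ) =ᵐ[μ] V₀ := AEEqFun.coeFn_mk _ _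
  have hVE : V ∈ L := by
    apply hL.linfty_subset
    refine ⟨1, ?_⟩
    filter_upwards [hVco] with ω hω
    rw [hω, hV₀, Set.indicator_apply]
    split_ifs <;> simp
  have hV0 : (0 : Ω →ₘ[μ] ℝ) ≤ V := by
    apply ae_le
    filter_upwards [hVco, (AEEqFun.coeFn_zero : ((0 : Ω →ₘ[μ] ℝ) : Ω → ℝ) =ᵐ[μ] 0)]
      with ω h1 h2
    rw [h1, h2, hV₀, Set.indicator_apply]
    split_ifs <;> simp
  have hipnn : 0 ≤ ip V W := hpos V hVE hV0
  have hintVW : Integrable (fun ω => V ω * W ω) μ := hWkd V hVE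
  set F : Ω → ℝ := fun ω => V₀ ω * g ω with hF
  have hFae : (fun ω => V ω * W ω) =ᵐ[μ] F := by
    filter_upwards [hVco, hgae] with ω h1 h2
    rw [hF, h1, h2]
  have hintF : Integrable F μ := hintVW.congr hFae
  have hFint_nn : 0 ≤ ∫ ω, F ω ∂μ := by
    rw [← integral_congr_ae hFae]
    exact hipnn
  have hFnonpos : ∀ ω, F ω ≤ 0 := by
    intro ω
    show V₀ ω * g ω ≤ 0
    rw [hV₀, Set.indicator_apply]
    split_ifs with h
    · simp only [Set.mem_setOf_eq] at h
      nlinarith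
    · simp
  have hFzero : F =ᵐ[μ] 0 := by
    have h1 : (0:ℝ) ≤ ∫ ω, -F ω ∂μ :=
      integral_nonneg fun ω => by simpa using neg_nonneg.mpr (hFnonpos ω)
    have h2 : ∫ ω, -F ω ∂μ = -∫ ω, F ω ∂μ := integral_neg F
    have h3 : ∫ ω, -F ω ∂μ = 0 := by linarith
    have h4 := (integral_eq_zero_iff_of_nonneg
      (fun ω => by simpa using neg_nonneg.mpr (hFnonpos ω) : 0 ≤ (fun ω => -F ω))
      hintF.neg).mp h3
    filter_upwards [h4] with ω hω
    simp only [Pi.zero_apply] at hω ⊢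
    linarith
  apply ae_le
  filter_upwards [hFzero, hgae, (AEEqFun.coeFn_zero : ((0 : Ω →ₘ[μ] ℝ) : Ω → ℝ) =ᵐ[μ] 0)]
    with ω h1 h2 h3
  rw [h3, h2]
  simp only [Pi.zero_apply]
  by_contra hlt
  push_neg at hlt
  have : F ω = g ω := by
    show V₀ ω * g ω = g ω
    rw [hV₀, Set.indicator_of_mem (show ω ∈ {ω | g ω < 0} from hlt)]
    ring
  rw [Pi.zero_apply] at h1
  rw [this] at h1
  linarith

/-- The systemic acceptance set is weakly closed. -/
lemma sysAcc_closed (hE : IsAdmissible EE nrmE)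
    (hS : IsAdmissibleImpact (prodSet Li) (prodSet fun i => kdual (Li i)) EE (kdual EE) S)
    (hA : IsAdmissibleAcceptance (prodSet Li) EE (kdual EE) S A) :
    @IsClosed _ (wtop (prodSet Li) (prodSet fun i => kdual (Li i)))
      {X : ↥(prodSet Li) | S (X : Fin d → (Ω →ₘ[μ] ℝ)) ∈ A} := by
  letI := wtop (prodSet Li) (prodSet fun i => kdual (Li i))
  rw [← isOpen_compl_iff, isOpen_iff_mem_nhds]
  intro X₁ hX₁
  obtain ⟨W, hWkd, hW0, β, hlt, hge⟩ := sep_E hE hA (hS.mapsTo _ X₁.2) hX₁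
  have husc := hS.usc W hWkd hW0
  have hopen : IsOpen {X : ↥(prodSet Li) | (∫ ω, S (X : Fin d → (Ω →ₘ[μ] ℝ)) ω * W ω ∂μ) < β} :=
    (upperSemicontinuous_iff_isOpen_preimage.mp husc) β
  apply Filter.mem_of_superset (hopen.mem_nhds (by exact hlt))
  intro X hX
  simp only [Set.mem_setOf_eq] at hX
  intro hXA
  exact absurd (hge _ hXA) (by exact not_le.mpr hX)

/-- The key finite-dimensional separation on the `X` side. -/
lemma sep_X (hLi : ∀ i, IsAdmissible (Li i) (nrmX i)) (hE : IsAdmissible EE nrmE)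
    (hS : IsAdmissibleImpact (prodSet Li) (prodSet fun i => kdual (Li i)) EE (kdual EE) S)
    (hA : IsAdmissibleAcceptance (prodSet Li) EE (kdual EE) S A)
    {X₁ : Fin d → (Ω →ₘ[μ] ℝ)} (hX₁X : X₁ ∈ prodSet Li) (hX₁ : S X₁ ∉ A) :
    ∃ Z : Fin d → (Ω →ₘ[μ] ℝ), (∀ i, Z i ∈ kdual (Li i)) ∧
      (∀ i, (0 : Ω →ₘ[μ] ℝ) ≤ Z i) ∧
      ∃ β : ℝ, pairing X₁ Z < β ∧ ∀ X ∈ prodSet Li, S X ∈ A → β ≤ pairing X Z := by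
  classical
  set XX := prodSet Li with hXX
  set XX' := prodSet (fun i => kdual (Li i)) with hXX'
  have h0A : S (0 : Fin d → (Ω →ₘ[μ] ℝ)) ∈ A := by rw [hS.normalized]; exact hA.zero_mem
  set Acc : Set ↥XX := {X : ↥XX | S (X : Fin d → (Ω →ₘ[μ] ℝ)) ∈ A} with hAcc
  letI : TopologicalSpace ↥XX := wtop XX XX'
  have hclosed : IsClosed Acc := sysAcc_closed hE hS hA
  set Φ : ↥XX → (↥XX' → ℝ) :=
    fun X Z => pairing (X : Fin d → (Ω →ₘ[μ] ℝ)) (Z : Fin d → (Ω →ₘ[μ] ℝ)) with hΦ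
  set x₁ : ↥XX := ⟨X₁, hX₁X⟩ with hx₁
  have hmemnhds : Accᶜ ∈ @nhds _ (wtop XX XX') x₁ :=
    hclosed.isOpen_compl.mem_nhds (by exact hX₁)
  have hn : (@nhds _ (wtop XX XX') x₁) = comap Φ (@nhds _ Pi.topologicalSpace (Φ x₁)) :=
    @nhds_induced _ _ Pi.topologicalSpace Φ x₁
  rw [hn, mem_comap] at hmemnhds
  obtain ⟨s, hs, hssub⟩ := hmemnhds
  rw [@nhds_pi _ _ _ (Φ x₁), Filter.mem_pi] at hs
  obtain ⟨I, hIfin, t, ht, hIt⟩ := hs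
  choose εf hεpos hball using fun W => Metric.mem_nhds_iff.mp (ht W)
  set J : Finset ↥XX' := hIfin.toFinset with hJ
  have hKey : ∀ X ∈ XX, S X ∈ A → ∃ W ∈ J,
      εf W ≤ |pairing X ((W : ↥XX') : Fin d → (Ω →ₘ[μ] ℝ)) -
        pairing X₁ ((W : ↥XX') : Fin d → (Ω →ₘ[μ] ℝ))| := by
    intro X hX hSX
    by_contra hcon
    push_neg at hcon
    have hmem : Φ ⟨X, hX⟩ ∈ I.pi t := by
      intro W hWI
      apply hball W
      have hWJ : W ∈ J := hIfin.mem_toFinset.mpr hWI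
      have := hcon W hWJ
      simpa only [Metric.mem_ball, Real.dist_eq] using this
    have : (⟨X, hX⟩ : ↥XX) ∈ Φ ⁻¹' s := hIt hmem
    exact (hssub this) hSX
  rcases J.eq_empty_or_nonempty with hJe | hJne
  · exfalso
    obtain ⟨W, hWJ, -⟩ := hKey 0 (prod_zero_mem hLi) h0A
    rw [hJe] at hWJ
    exact absurd hWJ (Finset.notMem_empty W)
  set ε : ℝ := J.inf' hJne εf with hε
  have hεpos' : 0 < ε := by
    rw [hε, Finset.lt_inf'_iff]
    exact fun W _ => hεpos W
  set φ : (Fin d → (Ω →ₘ[μ] ℝ)) → (↥J → ℝ) :=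
    fun X j => pairing X (((j : ↥XX') : Fin d → (Ω →ₘ[μ] ℝ))) with hφ
  set C : Set (↥J → ℝ) := φ '' {X | X ∈ XX ∧ S X ∈ A} with hC
  have hCconv : Convex ℝ C := by
    rintro x ⟨X, ⟨hX, hSX⟩, rfl⟩ y ⟨Y, ⟨hY, hSY⟩, rfl⟩ a b ha hb hab
    have hconv := acc_conv hLi hE hS hA hX hY hSX hSY ha (by linarith : a ≤ 1)
    rw [show (1 - a) = b by linarith] at hconv
    refine ⟨a • X + b • Y, ⟨hconv.1, hconv.2⟩, ?_⟩
    funext j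
    have hXi : ∀ i, Integrable
        (fun ω => X i ω * ((j : ↥XX') : Fin d → (Ω →ₘ[μ] ℝ)) i ω) μ :=
      fun i => (j : ↥XX').2 i _ (hX i)
    have hYi : ∀ i, Integrable
        (fun ω => Y i ω * ((j : ↥XX') : Fin d → (Ω →ₘ[μ] ℝ)) i ω) μ :=
      fun i => (j : ↥XX').2 i _ (hY i)
    simp only [hφ, Pi.add_apply, Pi.smul_apply, smul_eq_mul]
    rw [pairing_add (fun i => by simpa using integ_smul_mul a (hXi i))
        (fun i => by simpa using integ_smul_mul b (hYi i)),
      pairing_smul, pairing_smul]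
  have hsep : φ X₁ ∉ closure C := by
    intro hmem
    obtain ⟨y, hyC, hdist⟩ := Metric.mem_closure_iff.mp hmem ε hεpos'
    obtain ⟨X, ⟨hX, hSX⟩, rfl⟩ := hyC
    obtain ⟨W, hWJ, hWge⟩ := hKey X hX hSX
    have h1 : dist (φ X₁ ⟨W, hWJ⟩) (φ X ⟨W, hWJ⟩) ≤ dist (φ X₁) (φ X) :=
      dist_le_pi_dist (φ X₁) (φ X) ⟨W, hWJ⟩
    have h2 : dist (φ X₁ ⟨W, hWJ⟩) (φ X ⟨W, hWJ⟩) =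
        |pairing X ((W : ↥XX') : Fin d → (Ω →ₘ[μ] ℝ)) -
          pairing X₁ ((W : ↥XX') : Fin d → (Ω →ₘ[μ] ℝ))| := by
      rw [Real.dist_eq, abs_sub_comm]
    have h3 : ε ≤ εf W := Finset.inf'_le εf hWJ
    rw [h2] at h1
    linarith [hdist, le_trans (le_trans h3 hWge) h1]
  obtain ⟨f, u, hfu, hu⟩ :=
    geometric_hahn_banach_closed_point hCconv.closure isClosed_closure hsep
  set c : ↥J → ℝ := fun j => f (fun k => if j = k then 1 else 0) with hc
  have hfx : ∀ x : ↥J → ℝ, f x = ∑ j, x j * c j := by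
    intro x
    conv_lhs => rw [pi_eq_sum_univ x]
    rw [map_sum]
    exact Finset.sum_congr rfl fun j _ => by rw [_root_.map_smul]; simp [hc]
  set Z : Fin d → (Ω →ₘ[μ] ℝ) :=
    fun i => ∑ j : ↥J, (-(c j)) • (((j : ↥XX') : Fin d → (Ω →ₘ[μ] ℝ)) i) with hZ
  have hZkd : ∀ i, Z i ∈ kdual (Li i) := by
    intro i g hg
    have hint : ∀ j : ↥J, Integrable
        (fun ω => (-(c j)) * (g ω * ((j : ↥XX') : Fin d → (Ω →ₘ[μ] ℝ)) i ω)) μ :=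
      fun j => ((j : ↥XX').2 i g hg).const_mul _
    apply (integrable_finset_sum (Finset.univ : Finset ↥J) (fun j _ => hint j)).congr
    filter_upwards [coeFn_sum_smul (μ := μ) (Finset.univ : Finset ↥J) (fun j : ↥J => -(c j))
      (fun j : ↥J => ((j : ↥XX') : Fin d → (Ω →ₘ[μ] ℝ)) i)] with ω hω
    simp only [hZ]
    rw [hω, Finset.mul_sum]
    exact Finset.sum_congr rfl fun j _ => by ring
  have hipZ : ∀ X ∈ XX, ∀ i, ip (X i) (Z i) =
      ∑ j : ↥J, (-(c j)) * ip (X i) (((j : ↥XX') : Fin d → (Ω →ₘ[μ] ℝ)) i) := by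
    intro X hX i
    unfold ip
    have h2 : (fun ω => X i ω * Z i ω) =ᵐ[μ]
        fun ω => ∑ j : ↥J, (-(c j)) * (X i ω * ((j : ↥XX') : Fin d → (Ω →ₘ[μ] ℝ)) i ω) := by
      filter_upwards [coeFn_sum_smul (μ := μ) (Finset.univ : Finset ↥J) (fun j : ↥J => -(c j))
        (fun j : ↥J => ((j : ↥XX') : Fin d → (Ω →ₘ[μ] ℝ)) i)] with ω hω
      simp only [hZ]
      rw [hω, Finset.mul_sum]
      exact Finset.sum_congr rfl fun j _ => by ring
    rw [integral_congr_ae h2,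
      integral_finset_sum (Finset.univ : Finset ↥J)
        (fun j _ => ((j : ↥XX').2 i _ (hX i)).const_mul _)]
    exact Finset.sum_congr rfl fun j _ => integral_const_mul _ _
  have hpair : ∀ X ∈ XX, pairing X Z = -(f (φ X)) := by
    intro X hX
    have h1 : pairing X Z = ∑ i, ∑ j : ↥J, (-(c j)) *
        ip (X i) (((j : ↥XX') : Fin d → (Ω →ₘ[μ] ℝ)) i) :=
      Finset.sum_congr rfl fun i _ => hipZ X hX i
    rw [h1, Finset.sum_comm, hfx (φ X), ← Finset.sum_neg_distrib]
    refine Finset.sum_congr rfl fun j _ => ?_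
    have h3 : ∑ i, ip (X i) (((j : ↥XX') : Fin d → (Ω →ₘ[μ] ℝ)) i) = φ X j := rfl
    rw [← Finset.mul_sum, h3]
    ring
  have hZpos : ∀ i, (0 : Ω →ₘ[μ] ℝ) ≤ Z i := by
    intro i
    apply nonneg_of_ip_nonneg (hLi i) (hZkd i)
    intro V hV hV0
    by_contra hneg
    push_neg at hneg
    set v := ip V (Z i) with hv
    set t₀ := (|u| + 1) / (-v) with ht₀
    have ht₀pos : 0 < t₀ := div_pos (by positivity) (by linarith)
    set Y : Fin d → (Ω →ₘ[μ] ℝ) := Pi.single i (t₀ • V) with hY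
    have hYmem : Y ∈ XX := by
      intro k
      rcases eq_or_ne k i with hk | hk
      · subst hk; rw [hY, Pi.single_eq_same]; exact (hLi k).smul_mem _ _ hV
      · rw [hY, Pi.single_eq_of_ne hk]; exact (hLi k).zero_mem
    have hY0 : (0 : Fin d → (Ω →ₘ[μ] ℝ)) ≤ Y := by
      intro k
      rcases eq_or_ne k i with hk | hk
      · subst hk; rw [hY, Pi.single_eq_same]; exact smul_nonneg_ae (le_of_lt ht₀pos) hV0
      · rw [hY, Pi.single_eq_of_ne hk]; exact le_rfl
    have hSY : S Y ∈ A := acc_mono hE hS hA (prod_zero_mem hLi) hYmem hY0 h0A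
    have h5 : f (φ Y) < u := hfu _ (subset_closure ⟨Y, ⟨hYmem, hSY⟩, rfl⟩)
    have h6 : pairing Y Z = -(f (φ Y)) := hpair Y hYmem
    have h7 : pairing Y Z = t₀ * v := by
      unfold pairing
      rw [Finset.sum_eq_single i]
      · rw [hY, Pi.single_eq_same, ip_smul, hv]
      · intro k _ hk
        rw [hY, Pi.single_eq_of_ne hk, ip_zero_left]
      · intro h
        exact absurd (Finset.mem_univ i) h
    have h8 : t₀ * v = -(|u| + 1) := by
      rw [ht₀, div_mul_eq_mul_div, div_eq_iff (show -v ≠ 0 by linarith)]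
      ring
    have h9 : -u ≤ t₀ * v := by rw [h7] at h6; linarith
    rw [h8] at h9
    have := le_abs_self u
    have := neg_abs_le u
    linarith
  refine ⟨Z, hZkd, hZpos, -u, ?_, ?_⟩
  · rw [hpair X₁ hX₁X]
    linarith
  · intro X hX hSX
    rw [hpair X hX]
    have := hfu (φ X) (subset_closure ⟨X, ⟨hX, hSX⟩, rfl⟩)
    linarith

end Aux4
section Aux5
set_option linter.unusedSectionVars false
set_option maxHeartbeats 1000000

open MeasureTheory Filter Set Topology

variable {Ω : Type*} [MeasurableSpace Ω] {μ : Measure Ω} [IsProbabilityMeasure μ] {d : ℕ}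
variable {Li : Fin d → Set (Ω →ₘ[μ] ℝ)} {nrmX : Fin d → ((Ω →ₘ[μ] ℝ) → ℝ)}
variable {EE : Set (Ω →ₘ[μ] ℝ)} {nrmE : (Ω →ₘ[μ] ℝ) → ℝ}
variable {S : (Fin d → (Ω →ₘ[μ] ℝ)) → (Ω →ₘ[μ] ℝ)} {A : Set (Ω →ₘ[μ] ℝ)}

lemma cvec_eq_zero {m : Fin d → ℝ} (h : cvec μ m = 0) : m = 0 := by
  funext i
  have hi : (AEEqFun.const Ω (m i) : Ω →ₘ[μ] ℝ) = 0 := congrFun h i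
  have h2 := AEEqFun.coeFn_const (μ := μ) Ω (m i)
  rw [hi] at h2
  have h3 : ∀ᵐ ω ∂μ, m i = (0:ℝ) := by
    filter_upwards [h2, (AEEqFun.coeFn_zero : ((0 : Ω →ₘ[μ] ℝ) : Ω → ℝ) =ᵐ[μ] 0)] with ω hω h0
    have : Function.const Ω (m i) ω = (0 : Ω → ℝ) ω := by rw [← hω, h0]
    simpa [Function.const] using this
  haveI : (ae μ).NeBot := ae_neBot.mpr (IsProbabilityMeasure.ne_zero μ)
  obtain ⟨ω, hω⟩ := h3.exists
  simpa using hω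

lemma cvec_le_cvec {m m' : Fin d → ℝ} (h : ∀ i, m i ≤ m' i) : cvec μ m ≤ cvec μ m' :=
  fun i => const_le_const (h i)

/-- Directions of constant vectors staying in the acceptance set have zero sum only at `0`. -/
lemma dirR (hLi : ∀ i, IsAdmissible (Li i) (nrmX i)) (hE : IsAdmissible EE nrmE)
    (hS : IsAdmissibleImpact (prodSet Li) (prodSet fun i => kdual (Li i)) EE (kdual EE) S)
    (hA : IsAdmissibleAcceptance (prodSet Li) EE (kdual EE) S A)
    (hM0 : sysAcc (prodSet Li) S A ∩
        {X | ∃ m : Fin d → ℝ, (∑ i, m i) = 0 ∧ X = cvec μ m} = {0})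
    {u : Fin d → ℝ} (hu : ∀ t : ℝ, 0 ≤ t → S (cvec μ (t • u)) ∈ A)
    (hsum : (∑ i, u i) ≤ 0) : u = 0 := by
  classical
  by_contra hne
  obtain ⟨i₀, hi₀⟩ := Function.ne_iff.mp hne
  have hu1 : S (cvec μ u) ∈ A := by
    have := hu 1 zero_le_one
    rwa [one_smul] at this
  rcases eq_or_lt_of_le hsum with hsum0 | hslt
  · -- zero-sum case : contradicts hM0 directly
    have hmem : cvec μ u ∈ sysAcc (prodSet Li) S A ∩
        {X | ∃ m : Fin d → ℝ, (∑ i, m i) = 0 ∧ X = cvec μ m} :=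
      ⟨⟨cvec_mem hLi u, hu1⟩, ⟨u, hsum0, rfl⟩⟩
    rw [hM0] at hmem
    exact hne (cvec_eq_zero hmem)
  · -- strictly negative sum
    set c : ℝ := -(∑ i, u i) with hc
    have hcpos : 0 < c := by rw [hc]; linarith
    by_cases hex : ∃ j : Fin d, u + c • (Pi.single j 1 : Fin d → ℝ) ≠ 0
    · obtain ⟨j, hj⟩ := hex
      set v : Fin d → ℝ := u + c • (Pi.single j 1 : Fin d → ℝ) with hv
      have hvsum : (∑ i, v i) = 0 := by
        rw [hv]
        simp only [Pi.add_apply, Pi.smul_apply, smul_eq_mul]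
        rw [Finset.sum_add_distrib]
        have : (∑ i, c * (Pi.single j (1:ℝ) : Fin d → ℝ) i) = c := by
          rw [Finset.sum_eq_single j]
          · rw [Pi.single_eq_same]; ring
          · intro k _ hk; rw [Pi.single_eq_of_ne hk]; ring
          · intro h; exact absurd (Finset.mem_univ j) h
        rw [this, hc]; ring
      have hvu : ∀ i, u i ≤ v i := by
        intro i
        rw [hv]
        simp only [Pi.add_apply, Pi.smul_apply, smul_eq_mul]
        have : 0 ≤ c * (Pi.single j (1:ℝ) : Fin d → ℝ) i := by
          rcases eq_or_ne i j with h | h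
          · subst h; rw [Pi.single_eq_same]; linarith
          · rw [Pi.single_eq_of_ne h]; simp
        linarith
      have hSv : S (cvec μ v) ∈ A :=
        acc_mono hE hS hA (cvec_mem hLi u) (cvec_mem hLi v) (cvec_le_cvec hvu) hu1
      have hmem : cvec μ v ∈ sysAcc (prodSet Li) S A ∩
          {X | ∃ m : Fin d → ℝ, (∑ i, m i) = 0 ∧ X = cvec μ m} :=
        ⟨⟨cvec_mem hLi v, hSv⟩, ⟨v, hvsum, rfl⟩⟩
      rw [hM0] at hmem
      exact hj (cvec_eq_zero hmem)
    · -- degenerate case : u is a negative multiple of a single coordinate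
      push_neg at hex
      have huniq : ∀ k : Fin d, k = i₀ := by
        intro k
        by_contra hk
        have h1 := congrFun (hex k) k
        have h2 := congrFun (hex i₀) k
        simp only [Pi.add_apply, Pi.smul_apply, smul_eq_mul, Pi.zero_apply,
          Pi.single_eq_same, mul_one] at h1
        simp only [Pi.add_apply, Pi.smul_apply, smul_eq_mul, Pi.zero_apply,
          Pi.single_eq_of_ne hk, mul_zero, add_zero] at h2
        rw [h2] at h1
        simp only [zero_add] at h1
        exact absurd h1 (ne_of_gt hcpos)
      have hui₀ : u i₀ = -c := by
        have h1 := congrFun (hex i₀) i₀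
        simp only [Pi.add_apply, Pi.smul_apply, smul_eq_mul, Pi.zero_apply,
          Pi.single_eq_same, mul_one] at h1
        linarith
      obtain ⟨X₂, hX₂X, hX₂n⟩ := hA.preimage_proper
      obtain ⟨Z, hZkd, hZpos, β, hβlt, hβge⟩ := sep_X hLi hE hS hA hX₂X hX₂n
      have hpc : ∀ t : ℝ, 0 ≤ t → β ≤ t * (u i₀ * ∫ ω, Z i₀ ω ∂μ) := by
        intro t ht
        have h1 := hβge _ (cvec_mem hLi (t • u)) (hu t ht)
        rw [pairing_cvec] at h1
        have h2 : (∑ i, (t • u) i * ∫ ω, Z i ω ∂μ) = t * (u i₀ * ∫ ω, Z i₀ ω ∂μ) := by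
          rw [Finset.sum_eq_single i₀]
          · simp only [Pi.smul_apply, smul_eq_mul]; ring
          · intro k _ hk; exact absurd (huniq k) hk
          · intro h; exact absurd (Finset.mem_univ i₀) h
        rwa [h2] at h1
      set s₀ : ℝ := u i₀ * ∫ ω, Z i₀ ω ∂μ with hs₀
      have hβ0 : β ≤ 0 := by simpa using hpc 0 le_rfl
      have hs₀nonneg : 0 ≤ s₀ := by
        by_contra hneg
        push_neg at hneg
        have ht₀pos : 0 < (|β| + 1) / (-s₀) := div_pos (by positivity) (by linarith)
        have h1 := hpc _ (le_of_lt ht₀pos)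
        have h2 : (|β| + 1) / (-s₀) * s₀ = -(|β| + 1) := by
          rw [div_mul_eq_mul_div, div_eq_iff (show -s₀ ≠ 0 by linarith)]
          ring
        rw [h2] at h1
        have := le_abs_self β
        have := neg_abs_le β
        linarith
      have hZint : 0 ≤ ∫ ω, Z i₀ ω ∂μ := by
        apply integral_nonneg_of_ae
        filter_upwards [le_ae (hZpos i₀),
          (AEEqFun.coeFn_zero : ((0 : Ω →ₘ[μ] ℝ) : Ω → ℝ) =ᵐ[μ] 0)] with ω h1 h2
        rw [h2] at h1
        simpa using h1
      have hs₀nonpos : s₀ ≤ 0 := by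
        rw [hs₀, hui₀]
        nlinarith
      have hZzero : (∫ ω, Z i₀ ω ∂μ) = 0 := by
        rcases eq_or_lt_of_le hZint with h | h
        · exact h.symm
        · exfalso
          have : s₀ < 0 := by
            rw [hs₀, hui₀]
            nlinarith
          linarith
      have hZae : (Z i₀ : Ω → ℝ) =ᵐ[μ] 0 := by
        have hint : Integrable (Z i₀) μ := integrable_of_kdual (hLi i₀) (hZkd i₀)
        refine (integral_eq_zero_iff_of_nonneg_ae ?_ hint).mp hZzero
        filter_upwards [le_ae (hZpos i₀),
          (AEEqFun.coeFn_zero : ((0 : Ω →ₘ[μ] ℝ) : Ω → ℝ) =ᵐ[μ] 0)] with ω h1 h2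
        rw [h2] at h1
        simpa using h1
      have hpair0 : pairing X₂ Z = 0 := by
        unfold pairing
        apply Finset.sum_eq_zero
        intro k _
        have hk : k = i₀ := huniq k
        subst hk
        exact ip_eq_zero_of_ae_zero hZae
      rw [hpair0] at hβlt
      linarith

/-- If an eventually-acceptable family escapes to infinity in the direction `u`,
then the whole ray through `u` is acceptable. -/
lemma tend_dir (hLi : ∀ i, IsAdmissible (Li i) (nrmX i)) (hE : IsAdmissible EE nrmE)
    (hS : IsAdmissibleImpact (prodSet Li) (prodSet fun i => kdual (Li i)) EE (kdual EE) S)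
    (hA : IsAdmissibleAcceptance (prodSet Li) EE (kdual EE) S A)
    {ι : Type*} (G : Filter ι) [G.NeBot] (Xf : ι → ↥(prodSet Li)) (mf : ι → Fin d → ℝ)
    (u : Fin d → ℝ)
    (hacc : ∀ᶠ i in G, S ((Xf i : Fin d → (Ω →ₘ[μ] ℝ)) + cvec μ (mf i)) ∈ A)
    (hnorm : Tendsto (fun i => ‖mf i‖) G atTop)
    (hdir : Tendsto (fun i => ‖mf i‖⁻¹ • mf i) G (𝓝 u))
    (hbdd : ∀ Z : ↥(prodSet fun i => kdual (Li i)), ∃ B : ℝ, ∀ᶠ i in G,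
      |pairing (Xf i : Fin d → (Ω →ₘ[μ] ℝ)) (Z : Fin d → (Ω →ₘ[μ] ℝ))| ≤ B) :
    ∀ t : ℝ, 0 ≤ t → S (cvec μ (t • u)) ∈ A := by
  classical
  intro t ht
  letI := wtop (prodSet Li) (prodSet fun i => kdual (Li i))
  set g : ι → ↥(prodSet Li) := fun i =>
    ⟨(t * ‖mf i‖⁻¹) • ((Xf i : Fin d → (Ω →ₘ[μ] ℝ)) + cvec μ (mf i)),
      prod_smul_mem hLi _ (prod_add_mem hLi (Xf i).2 (cvec_mem hLi (mf i)))⟩ with hg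
  set xT : ↥(prodSet Li) := ⟨cvec μ (t • u), cvec_mem hLi _⟩ with hxT
  have hclosed := sysAcc_closed hE hS hA
  have hev : ∀ᶠ i in G, g i ∈ {X : ↥(prodSet Li) | S (X : Fin d → (Ω →ₘ[μ] ℝ)) ∈ A} := by
    filter_upwards [hacc, hnorm.eventually_ge_atTop (max t 1)] with i h1 h2
    have hnpos : (0:ℝ) < ‖mf i‖ := lt_of_lt_of_le (by positivity) h2
    have hq0 : 0 ≤ t * ‖mf i‖⁻¹ := by positivity
    have hq1 : t * ‖mf i‖⁻¹ ≤ 1 := by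
      rw [← div_eq_mul_inv, div_le_one hnpos]
      exact le_trans (le_max_left t 1) h2
    exact (acc_smul hLi hE hS hA
      (prod_add_mem hLi (Xf i).2 (cvec_mem hLi (mf i))) h1 hq0 hq1).2
  have htends : Tendsto g G (𝓝 xT) := by
    rw [tendsto_wtop_iff]
    intro Z
    obtain ⟨B, hB⟩ := hbdd Z
    have hq0 : Tendsto (fun i => t * ‖mf i‖⁻¹) G (𝓝 0) := by
      have := (hnorm.inv_tendsto_atTop).const_mul t
      simpa using this
    have hterm1 : Tendsto (fun i => (t * ‖mf i‖⁻¹) *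
        pairing (Xf i : Fin d → (Ω →ₘ[μ] ℝ)) (Z : Fin d → (Ω →ₘ[μ] ℝ))) G (𝓝 0) := by
      apply squeeze_zero_norm' (a := fun i => |t * ‖mf i‖⁻¹| * B)
      · filter_upwards [hB] with i hi
        rw [Real.norm_eq_abs, abs_mul]
        exact mul_le_mul_of_nonneg_left hi (abs_nonneg _)
      · have : Tendsto (fun i => |t * ‖mf i‖⁻¹|) G (𝓝 0) := by
          have := hq0.abs
          simpa using this
        simpa using this.mul_const B
    have hterm2 : Tendsto (fun i => t * ∑ k, ((‖mf i‖⁻¹ • mf i) k *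
        ∫ ω, (Z : Fin d → (Ω →ₘ[μ] ℝ)) k ω ∂μ)) G
        (𝓝 (t * ∑ k, (u k * ∫ ω, (Z : Fin d → (Ω →ₘ[μ] ℝ)) k ω ∂μ))) := by
      apply Tendsto.const_mul
      apply tendsto_finset_sum
      intro k _
      exact ((tendsto_pi_nhds.mp hdir) k).mul_const _
    have hsum := hterm1.add hterm2
    rw [zero_add] at hsum
    have heq : (fun i => (t * ‖mf i‖⁻¹) *
          pairing (Xf i : Fin d → (Ω →ₘ[μ] ℝ)) (Z : Fin d → (Ω →ₘ[μ] ℝ)) +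
          t * ∑ k, ((‖mf i‖⁻¹ • mf i) k * ∫ ω, (Z : Fin d → (Ω →ₘ[μ] ℝ)) k ω ∂μ)) =ᶠ[G]
        (fun i => pairing ((g i : ↥(prodSet Li)) : Fin d → (Ω →ₘ[μ] ℝ))
          (Z : Fin d → (Ω →ₘ[μ] ℝ))) := by
      filter_upwards [hnorm.eventually_ge_atTop 1] with i h2
      have hnpos : (0:ℝ) < ‖mf i‖ := lt_of_lt_of_le one_pos h2
      have hXint : ∀ k, Integrable (fun ω => (Xf i : Fin d → (Ω →ₘ[μ] ℝ)) k ω *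
          (Z : Fin d → (Ω →ₘ[μ] ℝ)) k ω) μ := fun k => Z.2 k _ ((Xf i).2 k)
      have hcint : ∀ k, Integrable (fun ω => (cvec μ (mf i)) k ω *
          (Z : Fin d → (Ω →ₘ[μ] ℝ)) k ω) μ := fun k => Z.2 k _ (const_mem (hLi k) _)
      show _ = pairing ((t * ‖mf i‖⁻¹) • ((Xf i : Fin d → (Ω →ₘ[μ] ℝ)) + cvec μ (mf i))) _
      rw [pairing_smul, pairing_add hXint hcint, pairing_cvec]
      rw [mul_add]
      congr 1
      rw [Finset.mul_sum, Finset.mul_sum]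
      apply Finset.sum_congr rfl
      intro k _
      simp only [Pi.smul_apply, smul_eq_mul]
      have : t * ‖mf i‖⁻¹ * (mf i k * ∫ ω, (Z : Fin d → (Ω →ₘ[μ] ℝ)) k ω ∂μ) =
          t * (‖mf i‖⁻¹ * mf i k * ∫ ω, (Z : Fin d → (Ω →ₘ[μ] ℝ)) k ω ∂μ) := by ring
      rw [this]
    have := hsum.congr' heq
    have hpT : pairing ((xT : ↥(prodSet Li)) : Fin d → (Ω →ₘ[μ] ℝ))
        (Z : Fin d → (Ω →ₘ[μ] ℝ)) =
        t * ∑ k, (u k * ∫ ω, (Z : Fin d → (Ω →ₘ[μ] ℝ)) k ω ∂μ) := by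
      show pairing (cvec μ (t • u)) _ = _
      rw [pairing_cvec, Finset.mul_sum]
      apply Finset.sum_congr rfl
      intro k _
      simp only [Pi.smul_apply, smul_eq_mul]
      ring
    rw [← hpT] at this
    exact this
  exact hclosed.mem_of_tendsto htends hev

/-- The key compactness argument : witnesses cannot escape to infinity. -/
lemma no_escape (hLi : ∀ i, IsAdmissible (Li i) (nrmX i)) (hE : IsAdmissible EE nrmE)
    (hS : IsAdmissibleImpact (prodSet Li) (prodSet fun i => kdual (Li i)) EE (kdual EE) S)
    (hA : IsAdmissibleAcceptance (prodSet Li) EE (kdual EE) S A)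
    (hM0 : sysAcc (prodSet Li) S A ∩
        {X | ∃ m : Fin d → ℝ, (∑ i, m i) = 0 ∧ X = cvec μ m} = {0})
    {ι : Type*} (G : Filter ι) [G.NeBot] (Xf : ι → ↥(prodSet Li)) (mf : ι → Fin d → ℝ)
    (hacc : ∀ᶠ i in G, S ((Xf i : Fin d → (Ω →ₘ[μ] ℝ)) + cvec μ (mf i)) ∈ A)
    (hnorm : Tendsto (fun i => ‖mf i‖) G atTop)
    (hbdd : ∀ Z : ↥(prodSet fun i => kdual (Li i)), ∃ B : ℝ, ∀ᶠ i in G,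
      |pairing (Xf i : Fin d → (Ω →ₘ[μ] ℝ)) (Z : Fin d → (Ω →ₘ[μ] ℝ))| ≤ B)
    (hsum : ∃ c : ℝ, ∀ᶠ i in G, (∑ k, mf i k) ≤ c) : False := by
  classical
  set v : ι → (Fin d → ℝ) := fun i => ‖mf i‖⁻¹ • mf i with hv
  have hv1 : ∀ᶠ i in G, v i ∈ Metric.sphere (0 : Fin d → ℝ) 1 := by
    filter_upwards [hnorm.eventually_ge_atTop 1] with i h2
    have hnpos : (0:ℝ) < ‖mf i‖ := lt_of_lt_of_le one_pos h2
    rw [Metric.mem_sphere, dist_zero_right, hv]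
    rw [norm_smul, norm_inv, norm_norm]
    field_simp
  have hmem : Metric.sphere (0 : Fin d → ℝ) 1 ∈ map v G := mem_map.mpr hv1
  have hle : map v G ≤ 𝓟 (Metric.sphere (0 : Fin d → ℝ) 1) := le_principal_iff.mpr hmem
  have hcpt : IsCompact (Metric.sphere (0 : Fin d → ℝ) 1) := isCompact_sphere 0 1
  obtain ⟨u, huS, hclu⟩ := hcpt hle
  have hnu : ‖u‖ = 1 := mem_sphere_zero_iff_norm.mp huS
  set G' := G ⊓ comap v (𝓝 u) with hG'
  haveI hG'ne : G'.NeBot := by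
    rw [hG']
    have h1 : (map v G ⊓ 𝓝 u).NeBot := by
      rw [inf_comm]
      exact hclu
    have h2 : map v (G ⊓ comap v (𝓝 u)) = map v G ⊓ 𝓝 u := Filter.push_pull v G (𝓝 u)
    have h3 : (map v (G ⊓ comap v (𝓝 u))).NeBot := h2 ▸ h1
    exact (Filter.map_neBot_iff v).mp h3
  have hG'le : G' ≤ G := inf_le_left
  have hdir : Tendsto v G' (𝓝 u) := by
    rw [tendsto_iff_comap]
    exact inf_le_right
  have hu := tend_dir hLi hE hS hA G' Xf mf u
    (hacc.filter_mono hG'le)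
    (hnorm.mono_left hG'le)
    hdir
    (fun Z => by obtain ⟨B, hB⟩ := hbdd Z; exact ⟨B, hB.filter_mono hG'le⟩)
  have hsumu : (∑ k, u k) ≤ 0 := by
    obtain ⟨c, hc⟩ := hsum
    have h1 : Tendsto (fun i => ∑ k, v i k) G' (𝓝 (∑ k, u k)) :=
      tendsto_finset_sum _ (fun k _ => (tendsto_pi_nhds.mp hdir) k)
    have h2 : Tendsto (fun i => c * ‖mf i‖⁻¹) G' (𝓝 0) := by
      have := ((hnorm.mono_left hG'le).inv_tendsto_atTop).const_mul c
      simpa using this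
    refine le_of_tendsto_of_tendsto h1 h2 ?_
    filter_upwards [(hc.filter_mono hG'le),
      ((hnorm.mono_left hG'le).eventually_ge_atTop 1)] with i h3 h4
    have hnpos : (0:ℝ) < ‖mf i‖ := lt_of_lt_of_le one_pos h4
    have : (∑ k, v i k) = ‖mf i‖⁻¹ * ∑ k, mf i k := by
      rw [Finset.mul_sum]
      apply Finset.sum_congr rfl
      intro k _
      simp [hv]
    rw [this, mul_comm c _]
    apply mul_le_mul_of_nonneg_left h3
    positivity
  have := dirR hLi hE hS hA hM0 hu hsumu
  rw [this] at hnu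
  simp at hnu
end Aux5
section Aux6
set_option linter.unusedSectionVars false
set_option maxHeartbeats 1000000

open MeasureTheory Filter Set Topology

variable {Ω : Type*} [MeasurableSpace Ω] {μ : Measure Ω} [IsProbabilityMeasure μ] {d : ℕ}
variable {Li : Fin d → Set (Ω →ₘ[μ] ℝ)} {nrmX : Fin d → ((Ω →ₘ[μ] ℝ) → ℝ)}
variable {EE : Set (Ω →ₘ[μ] ℝ)} {nrmE : (Ω →ₘ[μ] ℝ) → ℝ}
variable {S : (Fin d → (Ω →ₘ[μ] ℝ)) → (Ω →ₘ[μ] ℝ)} {A : Set (Ω →ₘ[μ] ℝ)}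

/-- The sets `T_c` of positions acceptable with total allocation at most `c` are closed. -/
lemma Tset_closed (hLi : ∀ i, IsAdmissible (Li i) (nrmX i)) (hE : IsAdmissible EE nrmE)
    (hS : IsAdmissibleImpact (prodSet Li) (prodSet fun i => kdual (Li i)) EE (kdual EE) S)
    (hA : IsAdmissibleAcceptance (prodSet Li) EE (kdual EE) S A)
    (hM0 : sysAcc (prodSet Li) S A ∩
        {X | ∃ m : Fin d → ℝ, (∑ i, m i) = 0 ∧ X = cvec μ m} = {0})
    (c : ℝ) :
    @IsClosed _ (wtop (prodSet Li) (prodSet fun i => kdual (Li i)))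
      {X : ↥(prodSet Li) | ∃ m : Fin d → ℝ, (∑ k, m k) ≤ c ∧
        S ((X : Fin d → (Ω →ₘ[μ] ℝ)) + cvec μ m) ∈ A} := by
  classical
  letI := wtop (prodSet Li) (prodSet fun i => kdual (Li i))
  set T : Set ↥(prodSet Li) := {X : ↥(prodSet Li) | ∃ m : Fin d → ℝ, (∑ k, m k) ≤ c ∧
    S ((X : Fin d → (Ω →ₘ[μ] ℝ)) + cvec μ m) ∈ A} with hT
  rw [isClosed_iff_clusterPt]
  intro X₀ hX₀
  haveI hFne : (𝓝 X₀ ⊓ 𝓟 T).NeBot := hX₀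
  set F := 𝓝 X₀ ⊓ 𝓟 T with hF
  set w : ↥(prodSet Li) → (Fin d → ℝ) := fun X =>
    if h : X ∈ T then h.choose else 0 with hw
  have hwspec : ∀ X ∈ T, (∑ k, w X k) ≤ c ∧
      S ((X : Fin d → (Ω →ₘ[μ] ℝ)) + cvec μ (w X)) ∈ A := by
    intro X hX
    rw [hw]
    simp only [dif_pos hX]
    exact hX.choose_spec
  have hTF : T ∈ F := mem_inf_of_right (mem_principal_self T)
  by_cases hclu : ∃ mstar : Fin d → ℝ, ClusterPt mstar (map w F)
  · -- a cluster point of the allocations exists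
    obtain ⟨m, hm⟩ := hclu
    set F' := F ⊓ comap w (𝓝 m) with hF'
    haveI hF'ne : F'.NeBot := by
      have h1 : (map w F ⊓ 𝓝 m).NeBot := by rw [inf_comm]; exact hm
      have h2 : map w (F ⊓ comap w (𝓝 m)) = map w F ⊓ 𝓝 m := Filter.push_pull w F (𝓝 m)
      exact (Filter.map_neBot_iff w).mp (h2 ▸ h1)
    have hF'F : F' ≤ F := inf_le_left
    have hXt : Tendsto (fun X : ↥(prodSet Li) => X) F' (𝓝 X₀) :=
      le_trans hF'F (le_trans inf_le_left le_rfl)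
    have hwt : Tendsto w F' (𝓝 m) := tendsto_iff_comap.mpr inf_le_right
    set Yf : ↥(prodSet Li) → ↥(prodSet Li) := fun X =>
      ⟨(X : Fin d → (Ω →ₘ[μ] ℝ)) + cvec μ (w X),
        prod_add_mem hLi X.2 (cvec_mem hLi (w X))⟩ with hYf
    set yT : ↥(prodSet Li) := ⟨(X₀ : Fin d → (Ω →ₘ[μ] ℝ)) + cvec μ m,
      prod_add_mem hLi X₀.2 (cvec_mem hLi m)⟩ with hyT
    have htendsY : Tendsto Yf F' (𝓝 yT) := by
      rw [tendsto_wtop_iff]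
      intro Z
      have hterm1 : Tendsto (fun X : ↥(prodSet Li) =>
          pairing (X : Fin d → (Ω →ₘ[μ] ℝ)) (Z : Fin d → (Ω →ₘ[μ] ℝ))) F'
          (𝓝 (pairing (X₀ : Fin d → (Ω →ₘ[μ] ℝ)) (Z : Fin d → (Ω →ₘ[μ] ℝ)))) := by
        have hcont := continuous_pairingZ (Li := Li) Z
        exact (hcont.tendsto X₀).comp hXt
      have hterm2 : Tendsto (fun X : ↥(prodSet Li) =>
          ∑ k, w X k * ∫ ω, (Z : Fin d → (Ω →ₘ[μ] ℝ)) k ω ∂μ) F'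
          (𝓝 (∑ k, m k * ∫ ω, (Z : Fin d → (Ω →ₘ[μ] ℝ)) k ω ∂μ)) :=
        tendsto_finset_sum _ (fun k _ => ((tendsto_pi_nhds.mp hwt) k).mul_const _)
      have hsum := hterm1.add hterm2
      have heq : ∀ X : ↥(prodSet Li),
          pairing ((Yf X : ↥(prodSet Li)) : Fin d → (Ω →ₘ[μ] ℝ)) (Z : Fin d → (Ω →ₘ[μ] ℝ)) =
          pairing (X : Fin d → (Ω →ₘ[μ] ℝ)) (Z : Fin d → (Ω →ₘ[μ] ℝ)) +
            ∑ k, w X k * ∫ ω, (Z : Fin d → (Ω →ₘ[μ] ℝ)) k ω ∂μ := by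
        intro X
        show pairing ((X : Fin d → (Ω →ₘ[μ] ℝ)) + cvec μ (w X)) _ = _
        rw [pairing_add (Y := cvec μ (w X)) (fun k => Z.2 k _ (X.2 k))
            (fun k => Z.2 k _ (const_mem (hLi k) (w X k))),
          pairing_cvec]
      have heqT : pairing ((yT : ↥(prodSet Li)) : Fin d → (Ω →ₘ[μ] ℝ))
          (Z : Fin d → (Ω →ₘ[μ] ℝ)) =
          pairing (X₀ : Fin d → (Ω →ₘ[μ] ℝ)) (Z : Fin d → (Ω →ₘ[μ] ℝ)) +
            ∑ k, m k * ∫ ω, (Z : Fin d → (Ω →ₘ[μ] ℝ)) k ω ∂μ := by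
        show pairing ((X₀ : Fin d → (Ω →ₘ[μ] ℝ)) + cvec μ m) _ = _
        rw [pairing_add (Y := cvec μ m) (fun k => Z.2 k _ (X₀.2 k))
            (fun k => Z.2 k _ (const_mem (hLi k) (m k))),
          pairing_cvec]
      rw [heqT]
      exact hsum.congr (fun X => (heq X).symm)
    have heventY : ∀ᶠ X in F', Yf X ∈
        {X : ↥(prodSet Li) | S (X : Fin d → (Ω →ₘ[μ] ℝ)) ∈ A} := by
      apply Filter.eventually_of_mem (hF'F hTF)
      intro X hX
      exact (hwspec X hX).2
    have hfinal : S ((X₀ : Fin d → (Ω →ₘ[μ] ℝ)) + cvec μ m) ∈ A :=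
      (sysAcc_closed hE hS hA).mem_of_tendsto htendsY heventY
    have hsm : (∑ k, m k) ≤ c := by
      have h1 : Tendsto (fun X : ↥(prodSet Li) => ∑ k, w X k) F' (𝓝 (∑ k, m k)) :=
        tendsto_finset_sum _ (fun k _ => (tendsto_pi_nhds.mp hwt) k)
      apply le_of_tendsto h1
      apply Filter.eventually_of_mem (hF'F hTF)
      intro X hX
      exact (hwspec X hX).1
    exact ⟨m, hsm, hfinal⟩
  · -- no cluster point : the allocations escape to infinity, contradiction
    exfalso
    push_neg at hclu
    have hnorm : Tendsto (fun X : ↥(prodSet Li) => ‖w X‖) F atTop := by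
      rw [tendsto_atTop]
      intro b
      have hbot : map w F ⊓ 𝓟 (Metric.closedBall (0 : Fin d → ℝ) b) = ⊥ := by
        by_contra hne
        haveI : (map w F ⊓ 𝓟 (Metric.closedBall (0 : Fin d → ℝ) b)).NeBot := ⟨hne⟩
        have hcpt : IsCompact (Metric.closedBall (0 : Fin d → ℝ) b) :=
          isCompact_closedBall 0 b
        obtain ⟨x, -, hx⟩ := hcpt (inf_le_right :
          map w F ⊓ 𝓟 (Metric.closedBall (0 : Fin d → ℝ) b) ≤ _)
        exact hclu x (hx.mono inf_le_left)
      rw [inf_principal_eq_bot] at hbot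
      have hbot2 : w ⁻¹' (Metric.closedBall (0 : Fin d → ℝ) b)ᶜ ∈ F := mem_map.mp hbot
      apply Filter.eventually_of_mem hbot2
      intro X hX
      simp only [Set.mem_preimage, Set.mem_compl_iff, Metric.mem_closedBall,
        dist_zero_right, not_le] at hX
      exact le_of_lt hX
    have hbdd : ∀ Z : ↥(prodSet fun i => kdual (Li i)), ∃ B : ℝ, ∀ᶠ X in F,
        |pairing ((X : ↥(prodSet Li)) : Fin d → (Ω →ₘ[μ] ℝ))
          (Z : Fin d → (Ω →ₘ[μ] ℝ))| ≤ B := by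
      intro Z
      refine ⟨|pairing (X₀ : Fin d → (Ω →ₘ[μ] ℝ)) (Z : Fin d → (Ω →ₘ[μ] ℝ))| + 1, ?_⟩
      have hcont := continuous_pairingZ (Li := Li) Z
      have ht : Tendsto (fun X : ↥(prodSet Li) =>
          pairing (X : Fin d → (Ω →ₘ[μ] ℝ)) (Z : Fin d → (Ω →ₘ[μ] ℝ))) F
          (𝓝 (pairing (X₀ : Fin d → (Ω →ₘ[μ] ℝ)) (Z : Fin d → (Ω →ₘ[μ] ℝ)))) :=
        (hcont.tendsto X₀).mono_left inf_le_left
      have := Metric.tendsto_nhds.mp ht 1 one_pos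
      filter_upwards [this] with X hX
      rw [Real.dist_eq] at hX
      have := abs_sub_abs_le_abs_sub
        (pairing (X : Fin d → (Ω →ₘ[μ] ℝ)) (Z : Fin d → (Ω →ₘ[μ] ℝ)))
        (pairing (X₀ : Fin d → (Ω →ₘ[μ] ℝ)) (Z : Fin d → (Ω →ₘ[μ] ℝ)))
      linarith
    have hacc : ∀ᶠ X : ↥(prodSet Li) in F, S (X.1 + cvec μ (w X)) ∈ A := by
      apply Filter.eventually_of_mem hTF
      intro X hX
      exact (hwspec X hX).2
    have hsum : ∃ c' : ℝ, ∀ᶠ X in F, (∑ k, w X k) ≤ c' := by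
      refine ⟨c, ?_⟩
      apply Filter.eventually_of_mem hTF
      intro X hX
      exact (hwspec X hX).1
    exact no_escape hLi hE hS hA hM0 F (fun X => X) w hacc hnorm hbdd hsum

end Aux6
section Aux7
set_option linter.unusedSectionVars false
set_option maxHeartbeats 1000000

open MeasureTheory Filter Set Topology

variable {Ω : Type*} [MeasurableSpace Ω] {μ : Measure Ω} [IsProbabilityMeasure μ] {d : ℕ}
variable {Li : Fin d → Set (Ω →ₘ[μ] ℝ)} {nrmX : Fin d → ((Ω →ₘ[μ] ℝ) → ℝ)}
variable {EE : Set (Ω →ₘ[μ] ℝ)} {nrmE : (Ω →ₘ[μ] ℝ) → ℝ}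
variable {S : (Fin d → (Ω →ₘ[μ] ℝ)) → (Ω →ₘ[μ] ℝ)} {A : Set (Ω →ₘ[μ] ℝ)}

lemma rho_le_of_acc {X : Fin d → (Ω →ₘ[μ] ℝ)} {m : Fin d → ℝ}
    (h : S (X + cvec μ m) ∈ A) : rho μ S A X ≤ ((∑ i, m i : ℝ) : EReal) :=
  iInf₂_le m h

lemma rho_lt_exists {X : Fin d → (Ω →ₘ[μ] ℝ)} {b : EReal} (hb : rho μ S A X < b) :
    ∃ m : Fin d → ℝ, S (X + cvec μ m) ∈ A ∧ ((∑ i, m i : ℝ) : EReal) < b := by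
  unfold rho at hb
  rw [iInf_lt_iff] at hb
  obtain ⟨m, hm⟩ := hb
  by_cases hmem : m ∈ {m : Fin d → ℝ | S (X + cvec μ m) ∈ A}
  · rw [iInf_pos hmem] at hm
    exact ⟨m, hmem, hm⟩
  · rw [iInf_neg hmem] at hm
    exact absurd hm not_top_lt

lemma rho_ne_bot (hLi : ∀ i, IsAdmissible (Li i) (nrmX i)) (hE : IsAdmissible EE nrmE)
    (hS : IsAdmissibleImpact (prodSet Li) (prodSet fun i => kdual (Li i)) EE (kdual EE) S)
    (hA : IsAdmissibleAcceptance (prodSet Li) EE (kdual EE) S A)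
    (hM0 : sysAcc (prodSet Li) S A ∩
        {X | ∃ m : Fin d → ℝ, (∑ i, m i) = 0 ∧ X = cvec μ m} = {0})
    {X : Fin d → (Ω →ₘ[μ] ℝ)} (hX : X ∈ prodSet Li) : rho μ S A X ≠ ⊥ := by
  intro hbot
  have hstep : ∀ n : ℕ, ∃ m : Fin d → ℝ, S (X + cvec μ m) ∈ A ∧ (∑ i, m i) < -(n:ℝ) := by
    intro n
    have hlt : rho μ S A X < ((-(n:ℝ) : ℝ) : EReal) := by
      rw [hbot]; exact EReal.bot_lt_coe _
    obtain ⟨m, hmA, hmlt⟩ := rho_lt_exists hlt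
    exact ⟨m, hmA, EReal.coe_lt_coe_iff.mp hmlt⟩
  choose mf hmfA hmflt using hstep
  by_cases hd : d = 0
  · subst hd
    have h1 := hmflt 1
    rw [show (∑ i, mf 1 i) = 0 from by simp] at h1
    norm_num at h1
  · have hdpos : (0:ℝ) < (d:ℝ) := by
      exact_mod_cast Nat.pos_of_ne_zero hd
    have hnormlow : ∀ n : ℕ, (n:ℝ)/(d:ℝ) ≤ ‖mf n‖ := by
      intro n
      have h1 : |∑ i, mf n i| ≤ ∑ i, |mf n i| := Finset.abs_sum_le_sum_abs _ _
      have h2 : (∑ i, |mf n i|) ≤ (d:ℝ) * ‖mf n‖ := by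
        have := Finset.sum_le_card_nsmul Finset.univ (fun i => |mf n i|) ‖mf n‖
          (fun i _ => by simpa [Real.norm_eq_abs] using norm_le_pi_norm (mf n) i)
        simpa [Finset.card_univ, nsmul_eq_mul] using this
      have h3 : (n:ℝ) ≤ |∑ i, mf n i| := by
        have := hmflt n
        rw [abs_of_neg (by linarith [Nat.cast_nonneg (α := ℝ) n] : (∑ i, mf n i) < 0)]
        linarith
      rw [div_le_iff₀ hdpos]
      calc (n:ℝ) ≤ |∑ i, mf n i| := h3
        _ ≤ ∑ i, |mf n i| := h1
        _ ≤ (d:ℝ) * ‖mf n‖ := h2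
        _ = ‖mf n‖ * (d:ℝ) := by ring
    have hnorm : Tendsto (fun n : ℕ => ‖mf n‖) atTop atTop :=
      tendsto_atTop_mono hnormlow ((tendsto_natCast_atTop_atTop).atTop_div_const hdpos)
    exact no_escape hLi hE hS hA hM0 atTop (fun _ => (⟨X, hX⟩ : ↥(prodSet Li))) mf
      (Filter.Eventually.of_forall (fun n => hmfA n))
      hnorm
      (fun Z => ⟨|pairing X (Z : Fin d → (Ω →ₘ[μ] ℝ))|,
        Filter.Eventually.of_forall (fun n => le_refl _)⟩)
      ⟨0, Filter.Eventually.of_forall (fun n => le_of_lt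
        (lt_of_lt_of_le (hmflt n) (by simp)))⟩

lemma rho_sublevel_eq (y : ℝ) :
    {X : ↥(prodSet Li) | rho μ S A (X : Fin d → (Ω →ₘ[μ] ℝ)) ≤ ((y:ℝ) : EReal)} =
    ⋂ n : ℕ, {X : ↥(prodSet Li) | ∃ m : Fin d → ℝ, (∑ k, m k) ≤ y + ((n:ℝ)+1)⁻¹ ∧
      S ((X : Fin d → (Ω →ₘ[μ] ℝ)) + cvec μ m) ∈ A} := by
  ext X
  simp only [Set.mem_iInter, Set.mem_setOf_eq]
  constructor
  · intro h n
    have hyy : (y:ℝ) < y + ((n:ℝ)+1)⁻¹ := by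
      have : (0:ℝ) < ((n:ℝ)+1)⁻¹ := by positivity
      linarith
    have hlt : rho μ S A (X : Fin d → (Ω →ₘ[μ] ℝ)) < ((y + ((n:ℝ)+1)⁻¹ : ℝ) : EReal) :=
      lt_of_le_of_lt h (EReal.coe_lt_coe_iff.mpr hyy)
    obtain ⟨m, hmA, hmlt⟩ := rho_lt_exists hlt
    exact ⟨m, le_of_lt (EReal.coe_lt_coe_iff.mp hmlt), hmA⟩
  · intro h
    by_contra hgt
    rw [not_le] at hgt
    obtain ⟨z, hz1, hz2⟩ := EReal.exists_between_coe_real hgt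
    have hyz : y < z := EReal.coe_lt_coe_iff.mp hz1
    obtain ⟨n, hn⟩ := exists_nat_one_div_lt (show (0:ℝ) < z - y by linarith)
    obtain ⟨m, hmle, hmA⟩ := h n
    have h1 : rho μ S A (X : Fin d → (Ω →ₘ[μ] ℝ)) ≤ ((∑ k, m k : ℝ) : EReal) :=
      rho_le_of_acc hmA
    rw [one_div] at hn
    have h4 : (∑ k, m k) < z := by linarith
    have h5 : rho μ S A (X : Fin d → (Ω →ₘ[μ] ℝ)) < ((z:ℝ) : EReal) :=
      lt_of_le_of_lt h1 (EReal.coe_lt_coe_iff.mpr h4)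
    exact absurd h5 (not_lt.mpr (le_of_lt hz2))

end Aux7
/-- if `S⁻¹(A) ∩ M₀ = {0}` with `M₀` the zero-sum constant vectors, then `ρ` is
proper and `σ(X,X')`-lower semicontinuous. -/
theorem statement4 {μ : Measure Ω} [IsProbabilityMeasure μ] {d : ℕ}
    (Li : Fin d → Set (Ω →ₘ[μ] ℝ)) (nrmX : Fin d → ((Ω →ₘ[μ] ℝ) → ℝ))
    (EE : Set (Ω →ₘ[μ] ℝ)) (nrmE : (Ω →ₘ[μ] ℝ) → ℝ)
    (S : (Fin d → (Ω →ₘ[μ] ℝ)) → (Ω →ₘ[μ] ℝ)) (A : Set (Ω →ₘ[μ] ℝ))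
    (hLi : ∀ i, IsAdmissible (Li i) (nrmX i))
    (hE : IsAdmissible EE nrmE)
    (hS : IsAdmissibleImpact (prodSet Li) (prodSet fun i => kdual (Li i)) EE (kdual EE) S)
    (hA : IsAdmissibleAcceptance (prodSet Li) EE (kdual EE) S A)
    (hM0 : sysAcc (prodSet Li) S A ∩
        {X | ∃ m : Fin d → ℝ, (∑ i, m i) = 0 ∧ X = cvec μ m} = {0}) :
    ProperOn (prodSet Li) (rho μ S A) ∧
      @LowerSemicontinuous (↥(prodSet Li)) EReal
        (wtop (prodSet Li) (prodSet fun i => kdual (Li i))) _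
        (fun X : ↥(prodSet Li) => rho μ S A (X : Fin d → (Ω →ₘ[μ] ℝ))) := by
  classical
  constructor
  · -- properness
    refine ⟨fun X hX => rho_ne_bot hLi hE hS hA hM0 hX, ?_⟩
    obtain ⟨X₀, hX₀X, hX₀A⟩ := hA.preimage_nonempty
    refine ⟨X₀, hX₀X, ?_⟩
    have hmem : S (X₀ + cvec μ (0 : Fin d → ℝ)) ∈ A := by
      rw [cvec_zero, add_zero]
      exact hX₀A
    have hle := rho_le_of_acc hmem
    have hle0 : rho μ S A X₀ ≤ ((0:ℝ) : EReal) := by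
      have h0 : (∑ i, (0 : Fin d → ℝ) i) = (0:ℝ) := by simp
      rwa [h0] at hle
    exact (lt_of_le_of_lt hle0 (EReal.coe_lt_top 0)).ne
  · -- lower semicontinuity
    letI := wtop (prodSet Li) (prodSet fun i => kdual (Li i))
    have key : ∀ b : EReal,
        IsClosed {X : ↥(prodSet Li) | rho μ S A (X : Fin d → (Ω →ₘ[μ] ℝ)) ≤ b} := by
      intro b
      induction b using EReal.rec with
      | bot =>
          have : {X : ↥(prodSet Li) | rho μ S A (X : Fin d → (Ω →ₘ[μ] ℝ)) ≤ ⊥} = ∅ := by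
            rw [Set.eq_empty_iff_forall_notMem]
            intro X hXmem
            exact (rho_ne_bot hLi hE hS hA hM0 X.2) (le_bot_iff.mp hXmem)
          rw [this]
          exact isClosed_empty
      | coe r =>
          rw [rho_sublevel_eq r]
          exact isClosed_iInter fun n =>
            Tset_closed hLi hE hS hA hM0 (r + ((n:ℝ)+1)⁻¹)
      | top =>
          have : {X : ↥(prodSet Li) | rho μ S A (X : Fin d → (Ω →ₘ[μ] ℝ)) ≤ ⊤} =
              Set.univ := Set.eq_univ_of_forall (fun X => (le_top : rho μ S A (X : Fin d → (Ω →ₘ[μ] ℝ)) ≤ ⊤))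
          rw [this]
          exact isClosed_univ
    intro X₀ y hy
    have hopen := (key y).isOpen_compl
    have hmem : X₀ ∈ {X : ↥(prodSet Li) | rho μ S A (X : Fin d → (Ω →ₘ[μ] ℝ)) ≤ y}ᶜ := by
      simp only [Set.mem_compl_iff, Set.mem_setOf_eq, not_le]
      exact hy
    apply Filter.eventually_of_mem (hopen.mem_nhds hmem)
    intro X hX
    simp only [Set.mem_compl_iff, Set.mem_setOf_eq, not_le] at hX
    exact hX

end SystemicRisk
end
end

section
/- Let S : X → E be an admissible impact map and A ⊂ E an admissible acceptance set, and assume X_i = E for every i ∈ {1,…,d}. Suppose that bar(A) ∩ E'_{++} ≠ ∅ and that there exist a ∈ (0,∞) and b ∈ ℝ such that S(X) ≤ a·Σ_{i=1}^d X_i + b almost surely for every X ∈ X. Then bar(S^{-1}(A)) ∩ C ∩ X'_{++} ≠ ∅. -/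
open MeasureTheory Filter Set
open scoped ENNReal

noncomputable section

namespace SystemicRisk

variable {Ω : Type*} [MeasurableSpace Ω]

variable {d : ℕ}

/-- Coercion of a finite sum of `AEEqFun`s. -/
lemma coeFn_finset_sum {μ : Measure Ω} {ι : Type*} (s : Finset ι)
    (f : ι → (Ω →ₘ[μ] ℝ)) : ⇑(∑ i ∈ s, f i) =ᵐ[μ] fun ω => ∑ i ∈ s, f i ω := by
  classical
  induction s using Finset.induction_on with
  | empty => simp only [Finset.sum_empty]; exact AEEqFun.coeFn_zero (β := ℝ) (μ := μ)
  | @insert a s ha ih =>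
    rw [Finset.sum_insert ha]
    filter_upwards [AEEqFun.coeFn_add (f a) (∑ i ∈ s, f i), ih] with ω h1 h2
    simp only [h1, Pi.add_apply, h2, Finset.sum_insert ha]

/-- a sufficient condition for `bar(S⁻¹(A)) ∩ C ∩ X'₊₊ ≠ ∅`. -/
theorem statement6 {μ : Measure Ω} [IsProbabilityMeasure μ] {d : ℕ}
    (Li : Fin d → Set (Ω →ₘ[μ] ℝ)) (nrmX : Fin d → ((Ω →ₘ[μ] ℝ) → ℝ))
    (EE : Set (Ω →ₘ[μ] ℝ)) (nrmE : (Ω →ₘ[μ] ℝ) → ℝ)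
    (S : (Fin d → (Ω →ₘ[μ] ℝ)) → (Ω →ₘ[μ] ℝ)) (A : Set (Ω →ₘ[μ] ℝ))
    (hLi : ∀ i, IsAdmissible (Li i) (nrmX i))
    (hE : IsAdmissible EE nrmE)
    (hS : IsAdmissibleImpact (prodSet Li) (prodSet fun i => kdual (Li i)) EE (kdual EE) S)
    (hA : IsAdmissibleAcceptance (prodSet Li) EE (kdual EE) S A)
    -- `X_i = E` for every `i`
    (hXiE : ∀ i, Li i = EE)
    -- `bar(A) ∩ E'₊₊ ≠ ∅`
    (hbar : (barrS A (kdual EE) ∩ strictPos μ).Nonempty)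
    -- `S(X) ≤ a ∑ᵢ Xᵢ + b`
    (hgrowth : ∃ a : ℝ, 0 < a ∧ ∃ b : ℝ, ∀ X ∈ prodSet Li,
        S X ≤ a • (∑ i, X i) + (AEEqFun.const Ω b : Ω →ₘ[μ] ℝ)) :
    (barrV (sysAcc (prodSet Li) S A) (prodSet fun i => kdual (Li i)) ∩
      Cset (prodSet fun i => kdual (Li i)) ∩ strictPosV μ d).Nonempty := by
  classical
  obtain ⟨W, hWbar, hWpos⟩ := hbar
  obtain ⟨hWdual, hWsupp⟩ : W ∈ kdual EE ∧ ⊥ < suppS A W := hWbar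
  replace hWpos : ∀ᵐ ω ∂μ, 0 < W ω := hWpos
  -- W is integrable
  have h1E : (1 : Ω →ₘ[μ] ℝ) ∈ EE := by
    refine hE.linfty_subset 1 ⟨1, ?_⟩
    filter_upwards [AEEqFun.coeFn_one (β := ℝ) (μ := μ)] with ω h
    simp [h]
  have hWint : Integrable (fun ω => W ω) μ := by
    refine (hWdual 1 h1E).congr ?_
    filter_upwards [AEEqFun.coeFn_one (β := ℝ) (μ := μ)] with ω h
    simp [h]
  have hWnn : ∀ᵐ ω ∂μ, 0 ≤ W ω := hWpos.mono fun ω h => h.le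
  set cW : ℝ := ∫ ω, W ω ∂μ with hcW
  have hcWpos : 0 < cW := by
    rcases lt_or_eq_of_le (integral_nonneg_of_ae hWnn) with h | h
    · exact h
    · exfalso
      have h0 : (fun ω => W ω) =ᵐ[μ] 0 :=
        (integral_eq_zero_iff_of_nonneg_ae hWnn hWint).1 h.symm
      have : ∀ᵐ _ω ∂μ, False := by
        filter_upwards [h0, hWpos] with ω h0 hp
        simp only [Pi.zero_apply] at h0; rw [h0] at hp; exact lt_irrefl _ hp
      exact (IsProbabilityMeasure.ne_zero μ) (by simpa using this)
  -- the dual vector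
  set Z : Fin d → (Ω →ₘ[μ] ℝ) := fun _ => cW⁻¹ • W with hZ
  have hZcoe : ∀ i : Fin d, ⇑(Z i) =ᵐ[μ] fun ω => cW⁻¹ * W ω := by
    intro i
    filter_upwards [AEEqFun.coeFn_smul cW⁻¹ W] with ω h
    simpa using h
  have hZdual : Z ∈ prodSet fun i => kdual (Li i) := by
    intro i
    show Z i ∈ kdual (Li i)
    rw [hXiE i]
    intro f hf
    have : Integrable (fun ω => cW⁻¹ * (f ω * W ω)) μ := (hWdual f hf).const_mul _
    refine this.congr ?_
    filter_upwards [hZcoe i] with ω h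
    rw [h]; ring
  -- finite lower bound for suppS
  have hsuppTop : suppS A W ≤ 0 := by
    have h0A : (0 : Ω →ₘ[μ] ℝ) ∈ A := hA.zero_mem
    have hip0 : ip (0 : Ω →ₘ[μ] ℝ) W = 0 := by
      rw [ip]
      have hz : (fun ω => (0 : Ω →ₘ[μ] ℝ) ω * W ω) =ᵐ[μ] (fun _ => (0:ℝ)) := by
        filter_upwards [AEEqFun.coeFn_zero (β := ℝ) (μ := μ)] with ω h
        simp [h]
      rw [integral_congr_ae hz, integral_zero]
    calc suppS A W ≤ ((ip (0 : Ω →ₘ[μ] ℝ) W : ℝ) : EReal) := iInf₂_le _ h0A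
    _ = 0 := by rw [hip0]; rfl
  set s : ℝ := (suppS A W).toReal with hs
  have hsupp_eq : ((s : ℝ) : EReal) = suppS A W :=
    EReal.coe_toReal (fun h => by rw [h] at hsuppTop; simp at hsuppTop)
      (fun h => by rw [h] at hWsupp; exact lt_irrefl _ hWsupp)
  have hs_le : ∀ U ∈ A, s ≤ ip U W := by
    intro U hU
    have : suppS A W ≤ ((ip U W : ℝ) : EReal) := iInf₂_le _ hU
    rw [← hsupp_eq] at this
    exact_mod_cast this
  obtain ⟨a, ha, b, hgr⟩ := hgrowth
  -- main lower bound on the pairing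
  set r : ℝ := cW⁻¹ * ((s - b * cW) / a) with hr
  have hlow : ∀ X ∈ sysAcc (prodSet Li) S A, r ≤ pairing X Z := by
    rintro X ⟨hXmem, hXA⟩
    have hXiint : ∀ i : Fin d, Integrable (fun ω => X i ω * W ω) μ := by
      intro i
      exact hWdual (X i) (by rw [← hXiE i]; exact hXmem i)
    have hSXint : Integrable (fun ω => S X ω * W ω) μ :=
      hWdual (S X) (hS.mapsTo X hXmem)
    -- the integrable RHS function
    have hRHSint : Integrable (fun ω => (a * (∑ i, X i ω) + b) * W ω) μ := by
      have h1 : Integrable (fun ω => a * (∑ i, X i ω * W ω) + b * W ω) μ := by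
        refine Integrable.add ?_ (hWint.const_mul b)
        exact (integrable_finset_sum _ fun i _ => hXiint i).const_mul a
      refine h1.congr (Eventually.of_forall fun ω => ?_)
      simp only [add_mul, mul_assoc, Finset.sum_mul]
    -- S X · W ≤ RHS · W a.e.
    have hmono : ∀ᵐ ω ∂μ, S X ω * W ω ≤ (a * (∑ i, X i ω) + b) * W ω := by
      have hle : ⇑(S X) ≤ᵐ[μ] ⇑(a • (∑ i, X i) + (AEEqFun.const Ω b : Ω →ₘ[μ] ℝ)) :=
        AEEqFun.coeFn_le.2 (hgr X hXmem)
      filter_upwards [hle, hWnn,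
        AEEqFun.coeFn_add (a • (∑ i, X i)) (AEEqFun.const Ω b : Ω →ₘ[μ] ℝ),
        AEEqFun.coeFn_smul a (∑ i, X i), coeFn_finset_sum Finset.univ X,
        AEEqFun.coeFn_const (μ := μ) Ω b] with ω h1 h2 h3 h4 h5 h6
      refine mul_le_mul_of_nonneg_right ?_ h2
      calc S X ω ≤ (a • (∑ i, X i) + (AEEqFun.const Ω b : Ω →ₘ[μ] ℝ)) ω := h1
      _ = a * (∑ i, X i ω) + b := by
          rw [h3]; simp only [Pi.add_apply, h4, Pi.smul_apply, smul_eq_mul, h5, h6]; rfl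
    have hint_le : ∫ ω, S X ω * W ω ∂μ ≤ ∫ ω, (a * (∑ i, X i ω) + b) * W ω ∂μ :=
      integral_mono_ae hSXint hRHSint hmono
    -- compute the RHS integral
    have hRHSval : ∫ ω, (a * (∑ i, X i ω) + b) * W ω ∂μ
        = a * (∑ i, ip (X i) W) + b * cW := by
      have heq : (fun ω => (a * (∑ i, X i ω) + b) * W ω)
          = fun ω => a * (∑ i, X i ω * W ω) + b * W ω := by
        funext ω
        simp only [add_mul, mul_assoc, Finset.sum_mul]
      rw [heq, integral_add ((integrable_finset_sum _ fun i _ => hXiint i).const_mul a)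
        (hWint.const_mul b), integral_const_mul, integral_const_mul,
        integral_finset_sum _ fun i _ => hXiint i]
      rfl
    have hlower : s ≤ ∫ ω, S X ω * W ω ∂μ := hs_le (S X) hXA
    have hsum_ge : (s - b * cW) / a ≤ ∑ i, ip (X i) W := by
      rw [div_le_iff₀' ha]
      have := hlower.trans hint_le
      rw [hRHSval] at this
      linarith
    -- pairing X Z = cW⁻¹ * ∑ i, ip (X i) W
    have hpair : pairing X Z = cW⁻¹ * ∑ i, ip (X i) W := by
      rw [pairing, Finset.mul_sum]
      refine Finset.sum_congr rfl fun i _ => ?_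
      rw [ip, ip, ← integral_const_mul]
      refine integral_congr_ae ?_
      filter_upwards [hZcoe i] with ω h
      rw [h]; ring
    rw [hpair, hr]
    exact mul_le_mul_of_nonneg_left hsum_ge (inv_nonneg.2 hcWpos.le)
  refine ⟨Z, ⟨⟨hZdual, ?_⟩, hZdual, ?_, ?_⟩, ?_⟩
  · -- barrier cone condition
    refine lt_of_lt_of_le (show (⊥ : EReal) < ((r : ℝ) : EReal) from EReal.bot_lt_coe r) ?_
    exact le_iInf₂ fun X hX => EReal.coe_le_coe_iff.2 (hlow X hX)
  · -- nonnegativity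
    intro i
    refine AEEqFun.coeFn_le.1 ?_
    filter_upwards [hZcoe i, AEEqFun.coeFn_zero (β := ℝ) (μ := μ), hWnn] with ω h1 h2 h3
    rw [h1, h2]
    exact mul_nonneg (inv_nonneg.2 hcWpos.le) h3
  · -- expectation one
    intro i
    rw [integral_congr_ae (hZcoe i), integral_const_mul, ← hcW, inv_mul_cancel₀ hcWpos.ne']
  · -- strict positivity
    intro i
    filter_upwards [hZcoe i, hWpos] with ω h1 h2
    rw [h1]
    exact mul_pos (inv_pos.2 hcWpos) h2


end SystemicRisk
end
end
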